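/- arXiv:0709.0987 — 6 statements merged into one kernel-verified Lean document; each statement's English description precedes it below -/
import Mathlib

section
/- The limit relation lim_{c→∞} c^{−n/2} H_n(x·√c; c) = U_n(x) holds, where U_n are the Chebyshev-like polynomials defined by U_0=1, U_1=x, U_{n+1}(x) = x·U_n(x) − U_{n−1}(x). -/
open Finset Polynomial

attribute [local instance] Classical.propDecidable

noncomputable def aH (c : ℝ) : ℕ → Polynomial ℝ
  | 0 => 1
  | 1 => Polynomial.X
  | n + 2 => Polynomial.X * aH c (n + 1) - Polynomial.C ((n : ℝ) + c) * aH c n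

noncomputable def chebU : ℕ → Polynomial ℝ
  | 0 => 1
  | 1 => Polynomial.X
  | n + 2 => Polynomial.X * chebU (n + 1) - chebU n

/-- `lim_{c→∞} c^{−n/2} H_n(x√c; c) = U_n(x)` pointwise in `x`. -/
theorem assocHermite_tendsto_chebyshev (n : ℕ) (x : ℝ) :
    Filter.Tendsto (fun c : ℝ => c ^ (-(n : ℝ) / 2) * (aH c n).eval (x * Real.sqrt c))
      Filter.atTop (nhds ((chebU n).eval x)) := by
  induction n using Nat.twoStepInduction with
  | zero =>
      simpa [aH, chebU] using tendsto_const_nhds (f := Filter.atTop (α := ℝ))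
        (a := (1 : ℝ))
  | one =>
      have heq : ∀ᶠ c : ℝ in Filter.atTop,
          c ^ (-(1 : ℕ) / 2 : ℝ) * (aH c 1).eval (x * Real.sqrt c) = x := by
        filter_upwards [Filter.eventually_gt_atTop 0] with c hc
        have hs : Real.sqrt c = c ^ (2⁻¹ : ℝ) := by
          rw [Real.sqrt_eq_rpow]; norm_num
        simp only [aH, Polynomial.eval_X, hs, Nat.cast_one]
        rw [show c ^ (-(1:ℝ) / 2) * (x * c ^ (2⁻¹ : ℝ)) =
            x * (c ^ (-(1:ℝ) / 2) * c ^ (2⁻¹ : ℝ)) by ring,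
          ← Real.rpow_add hc]
        norm_num
      refine Filter.Tendsto.congr' (Filter.EventuallyEq.symm heq) ?_
      simpa [chebU] using tendsto_const_nhds (f := Filter.atTop (α := ℝ)) (a := x)
  | more n ih1 ih2 =>
      have hdiv : Filter.Tendsto (fun c : ℝ => 1 + (n : ℝ) / c) Filter.atTop (nhds 1) := by
        have : Filter.Tendsto (fun c : ℝ => (n : ℝ) / c) Filter.atTop (nhds 0) :=
          Filter.Tendsto.div_atTop tendsto_const_nhds Filter.tendsto_id
        simpa using tendsto_const_nhds.add this
      have hmain : Filter.Tendsto
          (fun c : ℝ => x * (c ^ (-((n:ℝ)+1) / 2) * (aH c (n+1)).eval (x * Real.sqrt c))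
            - (1 + (n : ℝ) / c) * (c ^ (-(n:ℝ) / 2) * (aH c n).eval (x * Real.sqrt c)))
          Filter.atTop (nhds (x * (chebU (n+1)).eval x - 1 * (chebU n).eval x)) := by
        have h2 : Filter.Tendsto
            (fun c : ℝ => c ^ (-((n:ℝ)+1) / 2) * (aH c (n+1)).eval (x * Real.sqrt c))
            Filter.atTop (nhds ((chebU (n+1)).eval x)) := by
          convert ih2 using 3 with c
          push_cast
          ring_nf
        exact (h2.const_mul x).sub (hdiv.mul ih1)
      have heq : ∀ᶠ c : ℝ in Filter.atTop,
          x * (c ^ (-((n:ℝ)+1) / 2) * (aH c (n+1)).eval (x * Real.sqrt c))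
            - (1 + (n : ℝ) / c) * (c ^ (-(n:ℝ) / 2) * (aH c n).eval (x * Real.sqrt c))
          = c ^ (-((n+2 : ℕ) : ℝ) / 2) * (aH c (n+2)).eval (x * Real.sqrt c) := by
        filter_upwards [Filter.eventually_gt_atTop 0] with c hc
        have hs : Real.sqrt c = c ^ (2⁻¹ : ℝ) := by
          rw [Real.sqrt_eq_rpow]; norm_num
        have e1 : c ^ (-((n:ℝ)+1) / 2) = c ^ (-(n:ℝ) / 2) * c ^ (-(2⁻¹ : ℝ)) := by
          rw [← Real.rpow_add hc]; ring_nf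
        have e2 : c ^ (-((n+2 : ℕ) : ℝ) / 2) = c ^ (-(n:ℝ) / 2) * c⁻¹ := by
          rw [show (c⁻¹ : ℝ) = c ^ (-1 : ℝ) by rw [Real.rpow_neg_one],
            ← Real.rpow_add hc]
          push_cast; ring_nf
        have e3 : c ^ (-(2⁻¹ : ℝ)) * c ^ (2⁻¹ : ℝ) = 1 := by
          rw [← Real.rpow_add hc]; norm_num
        have e4 : c ^ (2⁻¹ : ℝ) * c⁻¹ = c ^ (-(2⁻¹ : ℝ)) := by
          rw [show (c⁻¹ : ℝ) = c ^ (-1 : ℝ) by rw [Real.rpow_neg_one],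
            ← Real.rpow_add hc]
          norm_num
        have e5 : 1 + (n:ℝ)/c = c⁻¹ * ((n:ℝ) + c) := by field_simp; ring
        simp only [aH, Polynomial.eval_sub, Polynomial.eval_mul, Polynomial.eval_X,
          Polynomial.eval_C, hs, e1, e2]
        linear_combination (-(x * c ^ (-(n:ℝ)/2) * (aH c (n+1)).eval (x * c ^ (2⁻¹:ℝ)))) * e4
          + (-(c ^ (-(n:ℝ)/2) * (aH c n).eval (x * c ^ (2⁻¹:ℝ)))) * e5
      refine Filter.Tendsto.congr' heq ?_
      simpa [chebU] using hmain
end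

section
/- The moments satisfy μ_{2n}(c) = Σ_M Π_{e ∈ M, e nonnested} c, i.e., μ_{2n}(c) equals the sum over all complete matchings M of {1,…,2n} of c raised to the number of edges of M that are not nested by any other edge. -/
open Finset Polynomial

attribute [local instance] Classical.propDecidable

/-- Sum of weights of lattice paths of length `n` from height `h` down to height `0`,
with steps `(1,1)` (weight 1) and `(1,-1)` (weight `j-1+c` when leaving height `j`),
staying weakly above the x-axis. -/
def pathsum (c : ℝ) : ℕ → ℕ → ℝ
  | 0, 0 => 1
  | 0, _ + 1 => 0
  | n + 1, 0 => pathsum c n 1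
  | n + 1, h + 1 => pathsum c n (h + 2) + ((h : ℝ) + c) * pathsum c n h

/-- The `n`-th moment of the associated Hermite polynomials. -/
def mu (c : ℝ) (n : ℕ) : ℝ := pathsum c n 0

/-- `M` is a complete matching of `{1,…,2n}`: each pair `(a,b)` has `a < b`
and every vertex in `{1,…,2n}` lies in exactly one pair. -/
def IsCompleteMatching (n : ℕ) (M : Finset (ℕ × ℕ)) : Prop :=
  (∀ p ∈ M, p.1 < p.2 ∧ 1 ≤ p.1 ∧ p.2 ≤ 2 * n) ∧
  (∀ v, 1 ≤ v → v ≤ 2 * n → ∃! p : ℕ × ℕ, p ∈ M ∧ (p.1 = v ∨ p.2 = v))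

/-- The finite set of all complete matchings of `{1,…,2n}`. -/
noncomputable def matchings (n : ℕ) : Finset (Finset (ℕ × ℕ)) :=
  ((Finset.Icc 1 (2 * n) ×ˢ Finset.Icc 1 (2 * n)).powerset).filter (IsCompleteMatching n)

/-- Edge `p = {a,b}` (a<b) is nested by edge `q = {a',b'}` (a'<b') if `a' < a < b < b'`. -/
def NestedBy (p q : ℕ × ℕ) : Prop := q.1 < p.1 ∧ p.2 < q.2

/-- The number of edges of `M` nested by no other edge of `M`. -/
noncomputable def nonnestedCount (M : Finset (ℕ × ℕ)) : ℕ :=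
  (M.filter (fun p => ∀ q ∈ M, ¬ NestedBy p q)).card

noncomputable def Match (L : Finset ℕ) (v m : ℕ) : Finset (Finset (ℕ × ℕ)) :=
  (((L ∪ Finset.Ico v (v + m)) ×ˢ Finset.Ico v (v + m)).powerset).filter (fun M =>
    (∀ p ∈ M, p.1 < p.2) ∧
    (∀ x ∈ L, ∃! p : ℕ × ℕ, p ∈ M ∧ p.1 = x) ∧
    (∀ x ∈ Finset.Ico v (v + m), ∃! p : ℕ × ℕ, p ∈ M ∧ (p.1 = x ∨ p.2 = x)))

lemma mem_Match {L : Finset ℕ} {v m : ℕ} {M : Finset (ℕ × ℕ)} :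
    M ∈ Match L v m ↔
      (∀ p ∈ M, p.1 ∈ L ∪ Finset.Ico v (v + m) ∧ p.2 ∈ Finset.Ico v (v + m)) ∧
      (∀ p ∈ M, p.1 < p.2) ∧
      (∀ x ∈ L, ∃! p : ℕ × ℕ, p ∈ M ∧ p.1 = x) ∧
      (∀ x ∈ Finset.Ico v (v + m), ∃! p : ℕ × ℕ, p ∈ M ∧ (p.1 = x ∨ p.2 = x)) := by
  simp only [Match, Finset.mem_filter, Finset.mem_powerset, Finset.subset_iff,
    Finset.mem_product, and_assoc]

lemma Match_zero_empty (v : ℕ) : Match (∅ : Finset ℕ) v 0 = {∅} := by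
  ext M
  simp only [mem_Match, Finset.mem_singleton]
  constructor
  · rintro ⟨h1, -, -, -⟩
    ext p
    simp only [Finset.notMem_empty, iff_false]
    intro hp
    have := (h1 p hp).2
    simp at this
  · rintro rfl
    simp

lemma Match_zero_nonempty {L : Finset ℕ} (v : ℕ) (hL : L.Nonempty) :
    Match L v 0 = ∅ := by
  ext M
  simp only [mem_Match, Finset.notMem_empty, iff_false]
  rintro ⟨h1, -, h3, -⟩
  obtain ⟨x, hx⟩ := hL
  obtain ⟨p, ⟨hpM, -⟩, -⟩ := h3 x hx
  have := (h1 p hpM).2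
  simp at this

lemma open_case {L : Finset ℕ} {v m : ℕ} (hL : ∀ x ∈ L, x < v) :
    (Match L v (m + 1)).filter (fun M => ∃ b, (v, b) ∈ M)
      = Match (insert v L) (v + 1) m := by
  ext M
  simp only [Finset.mem_filter, mem_Match]
  constructor
  · rintro ⟨⟨hC1, hC2, hC3, hC4⟩, b, hvb⟩
    have hvmem : v ∈ Finset.Ico v (v + (m + 1)) := by simp
    obtain ⟨p0, hp0, hp0u⟩ := hC4 v hvmem
    have hno2 : ∀ p ∈ M, p.2 ≠ v := by
      intro p hp hpv
      have h1 : p = p0 := hp0u p ⟨hp, Or.inr hpv⟩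
      have h2 : (v, b) = p0 := hp0u (v, b) ⟨hvb, Or.inl rfl⟩
      have he : p = (v, b) := h1.trans h2.symm
      have hlt := hC2 p hp
      rw [he] at hlt hpv
      simp only at hlt hpv
      omega
    refine ⟨?_, hC2, ?_, ?_⟩
    · intro p hp
      have h1 := (hC1 p hp).1
      have h2 := (hC1 p hp).2
      have hp2 : p.2 ∈ Finset.Ico (v + 1) (v + 1 + m) := by
        simp only [Finset.mem_Ico] at h2 ⊢
        have := hno2 p hp
        omega
      refine ⟨?_, hp2⟩
      simp only [Finset.mem_union, Finset.mem_insert, Finset.mem_Ico] at h1 ⊢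
      rcases h1 with h | h
      · tauto
      · omega
    · intro x hx
      rcases Finset.mem_insert.mp hx with hxv | hxL
      · rw [hxv]
        refine ⟨(v, b), ⟨hvb, rfl⟩, ?_⟩
        rintro q ⟨hq, hq1⟩
        have h1 : q = p0 := hp0u q ⟨hq, Or.inl hq1⟩
        have h2 : (v, b) = p0 := hp0u (v, b) ⟨hvb, Or.inl rfl⟩
        rw [h1, h2]
      · exact hC3 x hxL
    · intro x hx
      have : x ∈ Finset.Ico v (v + (m + 1)) := by
        simp only [Finset.mem_Ico] at hx ⊢; omega
      exact hC4 x this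
  · rintro ⟨hC1, hC2, hC3, hC4⟩
    obtain ⟨p0, ⟨hp0M, hp01⟩, hp0u⟩ := hC3 v (Finset.mem_insert_self v L)
    have hno2 : ∀ p ∈ M, p.2 ≠ v := by
      intro p hp hpv
      have := (hC1 p hp).2
      simp only [Finset.mem_Ico] at this
      omega
    refine ⟨⟨?_, hC2, ?_, ?_⟩, p0.2, ?_⟩
    · intro p hp
      have h1 := (hC1 p hp).1
      have h2 := (hC1 p hp).2
      constructor
      · simp only [Finset.mem_union, Finset.mem_insert, Finset.mem_Ico] at h1 ⊢
        rcases h1 with (rfl | h) | h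
        · right; omega
        · tauto
        · right; omega
      · simp only [Finset.mem_Ico] at h2 ⊢; omega
    · intro x hxL
      exact hC3 x (Finset.mem_insert_of_mem hxL)
    · intro x hx
      simp only [Finset.mem_Ico] at hx
      rcases eq_or_ne x v with rfl | hxv
      · refine ⟨p0, ⟨hp0M, Or.inl hp01⟩, ?_⟩
        rintro q ⟨hq, hq1 | hq2⟩
        · exact hp0u q ⟨hq, hq1⟩
        · exact absurd hq2 (hno2 q hq)
      · have : x ∈ Finset.Ico (v + 1) (v + 1 + m) := by
          simp only [Finset.mem_Ico]; omega
        exact hC4 x this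
    · have : p0 = (v, p0.2) := by
        rw [← hp01]
      rw [← this]; exact hp0M

lemma pair_notMem {L : Finset ℕ} {v m a b : ℕ} {M : Finset (ℕ × ℕ)}
    (hM : M ∈ Match L (v + 1) m) (hb : b ≤ v) : (a, b) ∉ M := by
  intro h
  have := (mem_Match.mp hM).1 (a, b) h
  simp only [Finset.mem_Ico] at this
  omega

lemma close_case {L : Finset ℕ} {v m a : ℕ} (hL : ∀ x ∈ L, x < v) (ha : a ∈ L) :
    (Match L v (m + 1)).filter (fun M => (a, v) ∈ M)
      = (Match (L.erase a) (v + 1) m).image (insert ((a, v) : ℕ × ℕ)) := by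
  have hav : a < v := hL a ha
  ext M
  simp only [Finset.mem_filter, Finset.mem_image]
  constructor
  · rintro ⟨hM, havM⟩
    obtain ⟨hC1, hC2, hC3, hC4⟩ := mem_Match.mp hM
    have hvmem : v ∈ Finset.Ico v (v + (m + 1)) := by simp
    obtain ⟨p0, hp0, hp0u⟩ := hC4 v hvmem
    have hav0 : (a, v) = p0 := hp0u (a, v) ⟨havM, Or.inr rfl⟩
    -- no other pair of M touches v
    have hnov : ∀ p ∈ M, p ≠ (a, v) → p.1 ≠ v ∧ p.2 ≠ v := by
      intro p hp hpne
      constructor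
      · intro h; exact hpne ((hp0u p ⟨hp, Or.inl h⟩).trans hav0.symm)
      · intro h; exact hpne ((hp0u p ⟨hp, Or.inr h⟩).trans hav0.symm)
    refine ⟨M.erase (a, v), ?_, Finset.insert_erase havM⟩
    rw [mem_Match]
    refine ⟨?_, ?_, ?_, ?_⟩
    · intro p hp
      obtain ⟨hpne, hpM⟩ := Finset.mem_erase.mp hp
      obtain ⟨h1, h2⟩ := hC1 p hpM
      obtain ⟨hn1, hn2⟩ := hnov p hpM hpne
      have h2' : p.2 ∈ Finset.Ico (v + 1) (v + 1 + m) := by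
        simp only [Finset.mem_Ico] at h2 ⊢; omega
      refine ⟨?_, h2'⟩
      simp only [Finset.mem_union, Finset.mem_erase, Finset.mem_Ico] at h1 ⊢
      rcases h1 with h | h
      · left
        refine ⟨?_, h⟩
        intro hpa
        -- p.1 = a : then p and (a,v) share first coordinate a
        obtain ⟨q0, hq0, hq0u⟩ := hC3 a ha
        have e1 : p = q0 := hq0u p ⟨hpM, hpa⟩
        have e2 : (a, v) = q0 := hq0u (a, v) ⟨havM, rfl⟩
        exact hpne (e1.trans e2.symm)
      · right
        have : p.1 ≠ v := hn1
        omega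
    · intro p hp; exact hC2 p (Finset.mem_erase.mp hp).2
    · intro x hx
      obtain ⟨hxa, hxL⟩ := Finset.mem_erase.mp hx
      obtain ⟨q0, ⟨hq0M, hq01⟩, hq0u⟩ := hC3 x hxL
      have hq0ne : q0 ≠ (a, v) := by
        intro h; rw [h] at hq01; exact hxa hq01.symm
      refine ⟨q0, ⟨Finset.mem_erase.mpr ⟨hq0ne, hq0M⟩, hq01⟩, ?_⟩
      rintro q ⟨hq, hq1⟩
      exact hq0u q ⟨(Finset.mem_erase.mp hq).2, hq1⟩
    · intro x hx
      simp only [Finset.mem_Ico] at hx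
      have hx' : x ∈ Finset.Ico v (v + (m + 1)) := by
        simp only [Finset.mem_Ico]; omega
      obtain ⟨q0, ⟨hq0M, hq0e⟩, hq0u⟩ := hC4 x hx'
      have hq0ne : q0 ≠ (a, v) := by
        intro h; rw [h] at hq0e
        simp only at hq0e
        rcases hq0e with h' | h' <;> omega
      refine ⟨q0, ⟨Finset.mem_erase.mpr ⟨hq0ne, hq0M⟩, hq0e⟩, ?_⟩
      rintro q ⟨hq, hqe⟩
      exact hq0u q ⟨(Finset.mem_erase.mp hq).2, hqe⟩
  · rintro ⟨M', hM', rfl⟩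
    have havM' : (a, v) ∉ M' := pair_notMem hM' (le_refl v)
    obtain ⟨hC1, hC2, hC3, hC4⟩ := mem_Match.mp hM'
    -- no pair of M' touches anything ≤ v
    have hlow : ∀ p ∈ M', v + 1 ≤ p.2 ∧ (p.1 ∈ L.erase a ∨ v + 1 ≤ p.1) := by
      intro p hp
      obtain ⟨h1, h2⟩ := hC1 p hp
      simp only [Finset.mem_Ico] at h2
      simp only [Finset.mem_union, Finset.mem_Ico] at h1
      refine ⟨h2.1, ?_⟩
      rcases h1 with h | h
      · left; exact h
      · right; omega
    refine ⟨?_, Finset.mem_insert_self _ _⟩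
    rw [mem_Match]
    refine ⟨?_, ?_, ?_, ?_⟩
    · intro p hp
      rcases Finset.mem_insert.mp hp with rfl | hpM'
      · simp only [Finset.mem_union, Finset.mem_Ico]
        exact ⟨Or.inl ha, by simp⟩
      · obtain ⟨h1, h2⟩ := hC1 p hpM'
        simp only [Finset.mem_union, Finset.mem_erase, Finset.mem_Ico] at h1 h2 ⊢
        constructor
        · rcases h1 with h | h
          · left; exact h.2
          · right; omega
        · omega
    · intro p hp
      rcases Finset.mem_insert.mp hp with rfl | hpM'
      · exact hav
      · exact hC2 p hpM'
    · intro x hxL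
      rcases eq_or_ne x a with hxa | hxa
      · rw [hxa]
        refine ⟨(a, v), ⟨Finset.mem_insert_self _ _, rfl⟩, ?_⟩
        rintro q ⟨hq, hq1⟩
        rcases Finset.mem_insert.mp hq with rfl | hqM'
        · rfl
        · exfalso
          rcases (hlow q hqM').2 with h | h
          · exact (Finset.mem_erase.mp h).1 hq1
          · omega
      · obtain ⟨q0, ⟨hq0M, hq01⟩, hq0u⟩ := hC3 x (Finset.mem_erase.mpr ⟨hxa, hxL⟩)
        refine ⟨q0, ⟨Finset.mem_insert_of_mem hq0M, hq01⟩, ?_⟩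
        rintro q ⟨hq, hq1⟩
        rcases Finset.mem_insert.mp hq with rfl | hqM'
        · exact absurd hq1.symm hxa
        · exact hq0u q ⟨hqM', hq1⟩
    · intro x hx
      simp only [Finset.mem_Ico] at hx
      rcases eq_or_ne x v with hxv | hxv
      · rw [hxv]
        refine ⟨(a, v), ⟨Finset.mem_insert_self _ _, Or.inr rfl⟩, ?_⟩
        rintro q ⟨hq, hqe⟩
        rcases Finset.mem_insert.mp hq with rfl | hqM'
        · rfl
        · exfalso
          obtain ⟨h2, h1⟩ := hlow q hqM'
          rcases hqe with h | h
          · rcases h1 with h' | h'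
            · have := hL q.1 (Finset.mem_erase.mp h').2; omega
            · omega
          · omega
      · have hx' : x ∈ Finset.Ico (v + 1) (v + 1 + m) := by
          simp only [Finset.mem_Ico]; omega
        obtain ⟨q0, ⟨hq0M, hq0e⟩, hq0u⟩ := hC4 x hx'
        refine ⟨q0, ⟨Finset.mem_insert_of_mem hq0M, hq0e⟩, ?_⟩
        rintro q ⟨hq, hqe⟩
        rcases Finset.mem_insert.mp hq with rfl | hqM'
        · exfalso
          simp only at hqe
          rcases hqe with h | h <;> omega
        · exact hq0u q ⟨hqM', hqe⟩

lemma nn_insert {L : Finset ℕ} {v m a : ℕ} (hL : ∀ x ∈ L, x < v) (ha : a ∈ L)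
    {M' : Finset (ℕ × ℕ)} (hM' : M' ∈ Match (L.erase a) (v + 1) m) :
    nonnestedCount (insert ((a, v) : ℕ × ℕ) M')
      = nonnestedCount M' + (if ∀ x ∈ L, ¬ x < a then 1 else 0) := by
  have hav : a < v := hL a ha
  have havM' : (a, v) ∉ M' := pair_notMem hM' (le_refl v)
  obtain ⟨hC1, hC2, hC3, hC4⟩ := mem_Match.mp hM'
  have hhigh : ∀ p ∈ M', v + 1 ≤ p.2 := by
    intro p hp
    have := (hC1 p hp).2
    simp only [Finset.mem_Ico] at this
    omega
  -- for p ∈ M', p is not nested by (a, v)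
  have hnb : ∀ p ∈ M', ¬ NestedBy p (a, v) := by
    intro p hp ⟨h1, h2⟩
    have := hhigh p hp
    simp only at h2
    omega
  -- the predicate over insert agrees with the predicate over M' for p ∈ M'
  have hagree : ∀ p ∈ M',
      ((∀ q ∈ insert ((a, v) : ℕ × ℕ) M', ¬ NestedBy p q) ↔ (∀ q ∈ M', ¬ NestedBy p q)) := by
    intro p hp
    constructor
    · intro h q hq; exact h q (Finset.mem_insert_of_mem hq)
    · intro h q hq
      rcases Finset.mem_insert.mp hq with rfl | hqM'
      · exact hnb p hp
      · exact h q hqM'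
  -- (a, v) is nonnested in insert iff a is minimal in L
  have hmin : (∀ q ∈ insert ((a, v) : ℕ × ℕ) M', ¬ NestedBy (a, v) q) ↔ (∀ x ∈ L, ¬ x < a) := by
    constructor
    · intro h x hx hxa
      have hxa' : x ≠ a := by omega
      obtain ⟨q0, ⟨hq0M, hq01⟩, -⟩ := hC3 x (Finset.mem_erase.mpr ⟨hxa', hx⟩)
      refine h q0 (Finset.mem_insert_of_mem hq0M) ⟨?_, ?_⟩
      · simp only [hq01]; exact hxa
      · simp only; exact hhigh q0 hq0M
    · intro h q hq ⟨h1, h2⟩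
      rcases Finset.mem_insert.mp hq with rfl | hqM'
      · simp only at h1; omega
      · have := (hC1 q hqM').1
        simp only [Finset.mem_union, Finset.mem_erase, Finset.mem_Ico] at this
        simp only at h1
        rcases this with hq1 | hq1
        · exact h q.1 hq1.2 h1
        · omega
  unfold nonnestedCount
  rw [Finset.filter_insert]
  have hfe : Finset.filter (fun p => ∀ q ∈ insert ((a, v) : ℕ × ℕ) M', ¬ NestedBy p q) M'
      = Finset.filter (fun p => ∀ q ∈ M', ¬ NestedBy p q) M' := by
    apply Finset.filter_congr
    intro p hp
    simp only [hagree p hp]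
  by_cases hc : ∀ x ∈ L, ¬ x < a
  · rw [if_pos (hmin.mpr hc), if_pos hc, hfe]
    rw [Finset.card_insert_of_notMem]
    intro h
    exact havM' (Finset.mem_filter.mp h).1
  · rw [if_neg (fun h => hc (hmin.mp h)), if_neg hc, hfe, Nat.add_zero]

lemma filter_not_eq_biUnion {L : Finset ℕ} {v m : ℕ} (hL : ∀ x ∈ L, x < v) :
    (Match L v (m + 1)).filter (fun M => ¬ ∃ b, (v, b) ∈ M)
      = L.biUnion (fun a => (Match L v (m + 1)).filter (fun M => (a, v) ∈ M)) := by
  ext M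
  simp only [Finset.mem_biUnion, Finset.mem_filter]
  constructor
  · rintro ⟨hM, hnb⟩
    obtain ⟨hC1, hC2, hC3, hC4⟩ := mem_Match.mp hM
    have hvmem : v ∈ Finset.Ico v (v + (m + 1)) := by simp
    obtain ⟨p0, ⟨hp0M, hp0e⟩, hp0u⟩ := hC4 v hvmem
    rcases hp0e with h | h
    · exfalso
      exact hnb ⟨p0.2, by rw [← h]; exact hp0M⟩
    · have hp0L : p0.1 ∈ L := by
        have h1 := (hC1 p0 hp0M).1
        have h2 := hC2 p0 hp0M
        simp only [Finset.mem_union, Finset.mem_Ico] at h1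
        rcases h1 with h' | h'
        · exact h'
        · omega
      exact ⟨p0.1, hp0L, hM, by rw [← h]; exact hp0M⟩
  · rintro ⟨a, haL, hM, havM⟩
    obtain ⟨hC1, hC2, hC3, hC4⟩ := mem_Match.mp hM
    have hvmem : v ∈ Finset.Ico v (v + (m + 1)) := by simp
    obtain ⟨p0, -, hp0u⟩ := hC4 v hvmem
    refine ⟨hM, ?_⟩
    rintro ⟨b, hvb⟩
    have e1 : (v, b) = p0 := hp0u (v, b) ⟨hvb, Or.inl rfl⟩
    have e2 : (a, v) = p0 := hp0u (a, v) ⟨havM, Or.inr rfl⟩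
    have : ((v, b) : ℕ × ℕ) = (a, v) := e1.trans e2.symm
    have hae : v = a := congrArg Prod.fst this
    have := hL a haL
    omega

lemma main_lemma (c : ℝ) : ∀ (m : ℕ) (L : Finset ℕ) (v : ℕ), (∀ x ∈ L, x < v) →
    ∑ M ∈ Match L v m, c ^ nonnestedCount M = pathsum c m L.card := by
  intro m
  induction m with
  | zero =>
    intro L v hL
    rcases L.eq_empty_or_nonempty with rfl | hne
    · rw [Match_zero_empty, Finset.card_empty, Finset.sum_singleton]
      simp [nonnestedCount, pathsum]
    · rw [Match_zero_nonempty v hne, Finset.sum_empty]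
      obtain ⟨k, hk⟩ : ∃ k, L.card = k + 1 :=
        ⟨L.card - 1, by have := Finset.card_pos.mpr hne; omega⟩
      rw [hk]
      rfl
  | succ m ih =>
    intro L v hL
    have hvL : v ∉ L := fun h => lt_irrefl v (hL v h)
    rw [← Finset.sum_filter_add_sum_filter_not (Match L v (m + 1))
      (fun M => ∃ b, (v, b) ∈ M)]
    have hfirst : ∑ M ∈ (Match L v (m + 1)).filter (fun M => ∃ b, (v, b) ∈ M),
        c ^ nonnestedCount M = pathsum c m (L.card + 1) := by
      rw [open_case hL, ih (insert v L) (v + 1) ?_, Finset.card_insert_of_notMem hvL]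
      intro x hx
      rcases Finset.mem_insert.mp hx with rfl | hx'
      · omega
      · have := hL x hx'; omega
    have hdisj : ∀ a ∈ L, ∀ b ∈ L, a ≠ b →
        Disjoint ((Match L v (m + 1)).filter (fun M => (a, v) ∈ M))
          ((Match L v (m + 1)).filter (fun M => (b, v) ∈ M)) := by
      intro a ha b hb hab
      rw [Finset.disjoint_left]
      intro M hMa hMb
      obtain ⟨hM, haM⟩ := Finset.mem_filter.mp hMa
      obtain ⟨-, hbM⟩ := Finset.mem_filter.mp hMb
      obtain ⟨-, -, -, hC4⟩ := mem_Match.mp hM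
      have hvmem : v ∈ Finset.Ico v (v + (m + 1)) := by simp
      obtain ⟨p0, -, hp0u⟩ := hC4 v hvmem
      have e1 : ((a, v) : ℕ × ℕ) = p0 := hp0u (a, v) ⟨haM, Or.inr rfl⟩
      have e2 : ((b, v) : ℕ × ℕ) = p0 := hp0u (b, v) ⟨hbM, Or.inr rfl⟩
      have : ((a, v) : ℕ × ℕ) = (b, v) := e1.trans e2.symm
      exact hab (congrArg Prod.fst this)
    have hsecond : ∀ a ∈ L,
        ∑ M ∈ (Match L v (m + 1)).filter (fun M => (a, v) ∈ M), c ^ nonnestedCount M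
          = (if ∀ x ∈ L, ¬ x < a then c else 1) * pathsum c m (L.card - 1) := by
      intro a ha
      rw [close_case hL ha]
      rw [Finset.sum_image (fun M1 h1 M2 h2 he => by
        rw [← Finset.erase_insert (pair_notMem h1 (le_refl v)),
            ← Finset.erase_insert (pair_notMem h2 (le_refl v)), he])]
      have : ∀ M' ∈ Match (L.erase a) (v + 1) m,
          c ^ nonnestedCount (insert ((a, v) : ℕ × ℕ) M')
            = (if ∀ x ∈ L, ¬ x < a then c else 1) * c ^ nonnestedCount M' := by
        intro M' hM'
        rw [nn_insert hL ha hM', pow_add]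
        by_cases hc : ∀ x ∈ L, ¬ x < a
        · rw [if_pos hc, if_pos hc]; ring
        · rw [if_neg hc, if_neg hc]; ring
      rw [Finset.sum_congr rfl this, ← Finset.mul_sum,
        ih (L.erase a) (v + 1) (fun x hx => by
          have := hL x (Finset.mem_erase.mp hx).2; omega),
        Finset.card_erase_of_mem ha]
    rcases L.eq_empty_or_nonempty with rfl | hne
    · rw [filter_not_eq_biUnion hL]
      simp only [Finset.biUnion_empty, Finset.sum_empty, Finset.card_empty] at hfirst ⊢
      rw [hfirst, add_zero]
      rfl
    · obtain ⟨h, hh⟩ : ∃ h, L.card = h + 1 :=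
        ⟨L.card - 1, by have := Finset.card_pos.mpr hne; omega⟩
      rw [filter_not_eq_biUnion hL, Finset.sum_biUnion hdisj,
        Finset.sum_congr rfl hsecond, hfirst]
      have hmin : L.filter (fun a => ∀ x ∈ L, ¬ x < a) = {L.min' hne} := by
        ext a
        simp only [Finset.mem_filter, Finset.mem_singleton]
        constructor
        · rintro ⟨haL, hP⟩
          have h1 := L.min'_le a haL
          have h2 := hP (L.min' hne) (L.min'_mem hne)
          omega
        · rintro rfl
          exact ⟨L.min'_mem hne, fun x hx => by have := L.min'_le x hx; omega⟩
      have hcard1 : (L.filter (fun a => ∀ x ∈ L, ¬ x < a)).card = 1 := by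
        rw [hmin, Finset.card_singleton]
      have hcard2 : (L.filter (fun a => ¬ ∀ x ∈ L, ¬ x < a)).card = h := by
        have := Finset.card_filter_add_card_filter_not
          (s := L) (p := fun a => ∀ x ∈ L, ¬ x < a)
        omega
      have hsum : ∑ a ∈ L, (if ∀ x ∈ L, ¬ x < a then c else 1) * pathsum c m (L.card - 1)
          = ((h : ℝ) + c) * pathsum c m h := by
        rw [← Finset.sum_mul, hh]
        congr 1
        · rw [Finset.sum_ite, Finset.sum_const, Finset.sum_const, hcard1, hcard2]
          simp [nsmul_eq_mul]
          ring
      rw [hsum, hh]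
      have e2 : h + 1 + 1 = h + 2 := by omega
      rw [e2]
      show _ = pathsum c m (h + 2) + ((h : ℝ) + c) * pathsum c m h
      ring

lemma matchings_eq_Match (n : ℕ) : matchings n = Match ∅ 1 (2 * n) := by
  ext M
  simp only [matchings, Finset.mem_filter, Finset.mem_powerset, mem_Match, IsCompleteMatching,
    Finset.empty_union, Finset.notMem_empty, Finset.subset_iff, Finset.mem_product,
    Finset.mem_Icc, Finset.mem_Ico, false_implies, implies_true, true_and]
  constructor
  · rintro ⟨hsub, h1, h2⟩
    refine ⟨?_, fun p hp => (h1 p hp).1, ?_⟩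
    · intro p hp
      have := hsub hp
      omega
    · intro x hx
      exact h2 x hx.1 (by omega)
  · rintro ⟨hC1, hC2, hC4⟩
    refine ⟨?_, ?_, ?_⟩
    · intro p hp
      have := hC1 p hp
      omega
    · intro p hp
      have := hC1 p hp
      exact ⟨hC2 p hp, by omega⟩
    · intro x hx1 hx2
      exact hC4 x ⟨hx1, by omega⟩


/-- `μ_{2n}(c)` equals the sum over complete matchings of `{1,…,2n}` of
`c` raised to the number of nonnested edges. -/
theorem moments_eq_nonnested_gf (c : ℝ) (n : ℕ) :
    mu c (2 * n) = ∑ M ∈ matchings n, c ^ nonnestedCount M := by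
  rw [matchings_eq_Match, main_lemma c (2 * n) ∅ 1 (by simp)]
  rfl
end

section
/- The moments satisfy μ_{2n}(c) = Σ_M c^{r(M)} where the sum is over all complete matchings M of {1,…,2n} and r(M) is the number of edges of M that have no right crossing. -/
open Finset Polynomial

attribute [local instance] Classical.propDecidable

/-- Edge `p = {a,b}` (a<b) has a right crossing from `q = {a',b'}` (a'<b') if `a < a' < b < b'`. -/
def RightCrossing (p q : ℕ × ℕ) : Prop := p.1 < q.1 ∧ q.1 < p.2 ∧ p.2 < q.2

/-- The number of edges of `M` having no right crossing. -/
noncomputable def noRightCrossingCount (M : Finset (ℕ × ℕ)) : ℕ :=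
  (M.filter (fun p => ∀ q ∈ M, ¬ RightCrossing p q)).card

lemma filter_irrel {α : Type*} (P : α → Prop) (h1 h2 : DecidablePred P) (s : Finset α) :
    @Finset.filter α P h1 s = @Finset.filter α P h2 s := by
  have : h1 = h2 := funext fun a => Subsingleton.elim _ _
  rw [this]

/-- Partial matching: `O` is the list of currently open left endpoints (all `≤ t`),
`M` matches the remaining positions `t+1, …, t+m` among themselves and closes all of `O`. -/
def IsPM (t m : ℕ) (O : List ℕ) (M : Finset (ℕ × ℕ)) : Prop :=
  (∀ p ∈ M, p.1 < p.2 ∧ (p.1 ∈ O ∨ t + 1 ≤ p.1) ∧ t + 1 ≤ p.2 ∧ p.2 ≤ t + m) ∧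
  (∀ v ∈ O, ∃! p : ℕ × ℕ, p ∈ M ∧ (p.1 = v ∨ p.2 = v)) ∧
  (∀ v, t + 1 ≤ v → v ≤ t + m → ∃! p : ℕ × ℕ, p ∈ M ∧ (p.1 = v ∨ p.2 = v))

noncomputable def pm (t m : ℕ) (O : List ℕ) : Finset (Finset (ℕ × ℕ)) :=
  ((Finset.Icc 1 (t + m) ×ˢ Finset.Icc 1 (t + m)).powerset).filter (IsPM t m O)

lemma isPM_of_mem_pm {t m : ℕ} {O : List ℕ} {M : Finset (ℕ × ℕ)}
    (h : M ∈ pm t m O) : IsPM t m O M := (Finset.mem_filter.mp h).2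

lemma mem_pm_of_isPM {t m : ℕ} {O : List ℕ} {M : Finset (ℕ × ℕ)}
    (hb : ∀ x ∈ O, 1 ≤ x ∧ x ≤ t) (h : IsPM t m O M) : M ∈ pm t m O := by
  refine Finset.mem_filter.mpr ⟨Finset.mem_powerset.mpr ?_, h⟩
  intro p hp
  obtain ⟨h1, h2, h3, h4⟩ := h.1 p hp
  have hp1 : 1 ≤ p.1 ∧ p.1 ≤ t + m := by
    rcases h2 with h2 | h2
    · have := hb _ h2; omega
    · omega
  rw [Finset.mem_product, Finset.mem_Icc, Finset.mem_Icc]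
  omega

lemma nodup_of_sorted_gt {O : List ℕ} (hs : O.Pairwise (· > ·)) : O.Nodup :=
  hs.imp (fun h => Nat.ne_of_gt h)

lemma nR_insert {t m : ℕ} {O : List ℕ} {a : ℕ} (ha : a ∈ O)
    (hs : O.Pairwise (· > ·)) (hb : ∀ x ∈ O, 1 ≤ x ∧ x ≤ t)
    {M' : Finset (ℕ × ℕ)} (hM' : IsPM (t+1) m (O.erase a) M') :
    noRightCrossingCount (insert (a, t+1) M')
      = noRightCrossingCount M' + (if ∀ x ∈ O, x ≤ a then 1 else 0) := by
  have hnd : O.Nodup := nodup_of_sorted_gt hs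
  have hsec : ∀ p ∈ M', t + 2 ≤ p.2 := by
    intro p hp; have := (hM'.1 p hp).2.2.1; omega
  have he : (a, t+1) ∉ M' := by
    intro h
    have h2 : t + 2 ≤ t + 1 := hsec _ h
    omega
  have step1 : ∀ p ∈ M',
      ((∀ q ∈ insert (a, t+1) M', ¬ RightCrossing p q) ↔ (∀ q ∈ M', ¬ RightCrossing p q)) := by
    intro p hp
    constructor
    · intro h q hq; exact h q (Finset.mem_insert_of_mem hq)
    · intro h q hq
      rcases Finset.mem_insert.mp hq with rfl | hq
      · rintro ⟨_, _, h3⟩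
        have h4 := hsec p hp
        have h5 : p.2 < t + 1 := h3
        omega
      · exact h q hq
  have step2 : (∀ q ∈ insert (a, t+1) M', ¬ RightCrossing (a, t+1) q) ↔ (∀ x ∈ O, x ≤ a) := by
    constructor
    · intro h x hx
      by_contra hxa
      push_neg at hxa
      have hxe : x ∈ O.erase a := hnd.mem_erase_iff.mpr ⟨fun hh => by omega, hx⟩
      obtain ⟨p, ⟨hpM, hpx⟩, _⟩ := hM'.2.1 x hxe
      have hxt : x ≤ t := (hb x hx).2
      have hp2 : t + 2 ≤ p.2 := hsec p hpM
      have hp1 : p.1 = x := by rcases hpx with h' | h' <;> omega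
      exact h p (Finset.mem_insert_of_mem hpM)
        ⟨show a < p.1 by omega, show p.1 < t + 1 by omega, show t + 1 < p.2 by omega⟩
    · intro h q hq hrc
      obtain ⟨h1, h2, h3⟩ := hrc
      rcases Finset.mem_insert.mp hq with rfl | hq
      · exact lt_irrefl a h1
      · have h1' : a < q.1 := h1
        have h2' : q.1 < t + 1 := h2
        rcases (hM'.1 q hq).2.1 with hqO | hqt
        · have hq1 : q.1 ∈ O := List.mem_of_mem_erase hqO
          have := h q.1 hq1
          omega
        · omega
  unfold noRightCrossingCount
  by_cases hc : ∀ x ∈ O, x ≤ a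
  · rw [if_pos hc]
    have key : ((insert (a, t+1) M').filter
          (fun p => ∀ q ∈ insert (a, t+1) M', ¬ RightCrossing p q)).card
        = ((M'.filter (fun p => ∀ q ∈ M', ¬ RightCrossing p q))).card + 1 := by
      have hfc : M'.filter (fun p => ∀ q ∈ insert (a, t+1) M', ¬ RightCrossing p q)
          = M'.filter (fun p => ∀ q ∈ M', ¬ RightCrossing p q) :=
        (filter_irrel _ _ _ _).trans ((Finset.filter_congr step1).trans (filter_irrel _ _ _ _))
      rw [Finset.filter_insert, if_pos (step2.mpr hc), hfc,
        Finset.card_insert_of_notMem (fun h => he (Finset.mem_filter.mp h).1)]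
    exact Eq.trans (congrArg Finset.card (filter_irrel _ _ _ _))
      (key.trans (congrArg (· + 1) (congrArg Finset.card (filter_irrel _ _ _ _))))
  · rw [if_neg hc, Nat.add_zero]
    have key : ((insert (a, t+1) M').filter
          (fun p => ∀ q ∈ insert (a, t+1) M', ¬ RightCrossing p q)).card
        = ((M'.filter (fun p => ∀ q ∈ M', ¬ RightCrossing p q))).card := by
      have hfc : M'.filter (fun p => ∀ q ∈ insert (a, t+1) M', ¬ RightCrossing p q)
          = M'.filter (fun p => ∀ q ∈ M', ¬ RightCrossing p q) :=
        (filter_irrel _ _ _ _).trans ((Finset.filter_congr step1).trans (filter_irrel _ _ _ _))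
      rw [Finset.filter_insert, if_neg (fun h => hc (step2.mp h)), hfc]
    exact Eq.trans (congrArg Finset.card (filter_irrel _ _ _ _))
      (key.trans (congrArg Finset.card (filter_irrel _ _ _ _)))

lemma pm_succ (t m : ℕ) (O : List ℕ) (hs : O.Pairwise (· > ·))
    (hb : ∀ x ∈ O, 1 ≤ x ∧ x ≤ t) :
    pm t (m+1) O
      = pm (t+1) m ((t+1) :: O)
        ∪ O.toFinset.biUnion (fun a => (pm (t+1) m (O.erase a)).image (insert (a, t+1))) := by
  have hnd : O.Nodup := nodup_of_sorted_gt hs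
  ext M
  constructor
  · intro hM
    obtain ⟨hp1, hp2, hp3⟩ := isPM_of_mem_pm hM
    obtain ⟨p, ⟨hpM, hpv⟩, hpu⟩ := hp3 (t+1) (by omega) (by omega)
    have huniq : ∀ q ∈ M, (q.1 = t+1 ∨ q.2 = t+1) → q = p := fun q hq h => hpu q ⟨hq, h⟩
    rcases hpv with hpv | hpv
    · -- open step: p.1 = t+1
      apply Finset.mem_union_left
      have hbcons : ∀ x ∈ (t+1) :: O, 1 ≤ x ∧ x ≤ t + 1 := by
        intro x hx
        rcases List.mem_cons.mp hx with rfl | hx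
        · omega
        · have := hb x hx; omega
      apply mem_pm_of_isPM hbcons
      refine ⟨?_, ?_, ?_⟩
      · intro q hq
        obtain ⟨h1, h2, h3, h4⟩ := hp1 q hq
        have hq2 : q.2 ≠ t + 1 := by
          intro hh
          have := huniq q hq (Or.inr hh)
          subst this; omega
        refine ⟨h1, ?_, by omega, by omega⟩
        rcases h2 with h2 | h2
        · exact Or.inl (List.mem_cons_of_mem _ h2)
        · rcases Nat.eq_or_lt_of_le h2 with h2 | h2
          · exact Or.inl (by rw [← h2]; exact List.mem_cons_self)
          · exact Or.inr (by omega)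
      · intro v hv
        rcases List.mem_cons.mp hv with rfl | hv
        · exact ⟨p, ⟨hpM, Or.inl hpv⟩, hpu⟩
        · exact hp2 v hv
      · intro v h1 h2
        exact hp3 v (by omega) (by omega)
    · -- close step: p.2 = t+1
      have hp1O : p.1 ∈ O := by
        rcases (hp1 p hpM).2.1 with h | h
        · exact h
        · have := (hp1 p hpM).1; omega
      have hpeq : p = (p.1, t+1) := Prod.ext rfl hpv
      apply Finset.mem_union_right
      apply Finset.mem_biUnion.mpr
      refine ⟨p.1, List.mem_toFinset.mpr hp1O, ?_⟩
      apply Finset.mem_image.mpr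
      refine ⟨M.erase p, ?_, ?_⟩
      · apply mem_pm_of_isPM (by intro x hx; have := hb x (List.mem_of_mem_erase hx); omega)
        have hmem : ∀ q ∈ M.erase p, q ∈ M ∧ q ≠ p := fun q hq =>
          ⟨Finset.mem_of_mem_erase hq, (Finset.mem_erase.mp hq).1⟩
        refine ⟨?_, ?_, ?_⟩
        · intro q hq
          obtain ⟨hqM, hqp⟩ := hmem q hq
          obtain ⟨h1, h2, h3, h4⟩ := hp1 q hqM
          have hq2 : q.2 ≠ t + 1 := fun hh => hqp (huniq q hqM (Or.inr hh))
          have hq1 : q.1 ≠ t + 1 := fun hh => hqp (huniq q hqM (Or.inl hh))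
          refine ⟨h1, ?_, by omega, by omega⟩
          rcases h2 with h2 | h2
          · refine Or.inl (hnd.mem_erase_iff.mpr ⟨?_, h2⟩)
            intro hh
            apply hqp
            apply huniq q hqM
            -- q.1 = p.1, both contain p.1 ∈ O, use hp2 uniqueness
            exfalso
            obtain ⟨r, hr, hru⟩ := hp2 p.1 hp1O
            have e1 : q = r := hru q ⟨hqM, Or.inl hh⟩
            have e2 : p = r := hru p ⟨hpM, Or.inl rfl⟩
            exact hqp (e1.trans e2.symm)
          · exact Or.inr (by omega)
        · intro v hv
          have hvO : v ∈ O := List.mem_of_mem_erase hv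
          have hvp1 : v ≠ p.1 := (hnd.mem_erase_iff.mp hv).1
          have hvt : v ≤ t := (hb v hvO).2
          obtain ⟨q, ⟨hqM, hqv⟩, hqu⟩ := hp2 v hvO
          have hqp : q ≠ p := by
            intro hh; subst hh
            rcases hqv with h' | h' <;> omega
          refine ⟨q, ⟨Finset.mem_erase.mpr ⟨hqp, hqM⟩, hqv⟩, ?_⟩
          intro r ⟨hr, hrv⟩
          exact hqu r ⟨Finset.mem_of_mem_erase hr, hrv⟩
        · intro v h1 h2
          obtain ⟨q, ⟨hqM, hqv⟩, hqu⟩ := hp3 v (by omega) (by omega)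
          have hp1t : p.1 ≤ t := (hb _ hp1O).2
          have hqp : q ≠ p := by
            intro hh; subst hh
            rcases hqv with h' | h' <;> omega
          refine ⟨q, ⟨Finset.mem_erase.mpr ⟨hqp, hqM⟩, hqv⟩, ?_⟩
          intro r ⟨hr, hrv⟩
          exact hqu r ⟨Finset.mem_of_mem_erase hr, hrv⟩
      · rw [← hpeq, Finset.insert_erase hpM]
  · intro h
    rcases Finset.mem_union.mp h with h | h
    · obtain ⟨hp1, hp2, hp3⟩ := isPM_of_mem_pm h
      apply mem_pm_of_isPM hb
      refine ⟨?_, ?_, ?_⟩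
      · intro q hq
        obtain ⟨h1, h2, h3, h4⟩ := hp1 q hq
        refine ⟨h1, ?_, by omega, by omega⟩
        rcases h2 with h2 | h2
        · rcases List.mem_cons.mp h2 with h2' | h2
          · exact Or.inr (by omega)
          · exact Or.inl h2
        · exact Or.inr (by omega)
      · intro v hv
        exact hp2 v (List.mem_cons_of_mem _ hv)
      · intro v h1 h2
        rcases Nat.eq_or_lt_of_le h1 with h1 | h1
        · exact h1 ▸ hp2 (t+1) (List.mem_cons_self)
        · exact hp3 v (by omega) (by omega)
    · obtain ⟨a, haf, hMi⟩ := Finset.mem_biUnion.mp h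
      obtain ⟨M', hM', rfl⟩ := Finset.mem_image.mp hMi
      have ha : a ∈ O := List.mem_toFinset.mp haf
      have hat : 1 ≤ a ∧ a ≤ t := hb a ha
      obtain ⟨hp1, hp2, hp3⟩ := isPM_of_mem_pm hM'
      have hsec : ∀ q ∈ M', t + 2 ≤ q.2 := by
        intro q hq; have := (hp1 q hq).2.2.1; omega
      apply mem_pm_of_isPM hb
      refine ⟨?_, ?_, ?_⟩
      · intro q hq
        rcases Finset.mem_insert.mp hq with rfl | hq
        · exact ⟨show a < t + 1 by omega, Or.inl ha, le_refl (t+1),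
            show t + 1 ≤ t + (m + 1) by omega⟩
        · obtain ⟨h1, h2, h3, h4⟩ := hp1 q hq
          refine ⟨h1, ?_, by omega, by omega⟩
          rcases h2 with h2 | h2
          · exact Or.inl (List.mem_of_mem_erase h2)
          · exact Or.inr (by omega)
      · intro v hv
        by_cases hva : v = a
        · subst hva
          refine ⟨(v, t+1), ⟨Finset.mem_insert_self _ _, Or.inl rfl⟩, ?_⟩
          rintro r ⟨hr, hrv⟩
          rcases Finset.mem_insert.mp hr with rfl | hr
          · rfl
          · exfalso
            have h2 := hsec r hr
            have hr1 : r.1 = v := by rcases hrv with h' | h' <;> omega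
            rcases (hp1 r hr).2.1 with hrO | hrt
            · exact (hnd.mem_erase_iff.mp (hr1 ▸ hrO)).1 rfl
            · omega
        · have hve : v ∈ O.erase a := hnd.mem_erase_iff.mpr ⟨hva, hv⟩
          obtain ⟨q, ⟨hqM, hqv⟩, hqu⟩ := hp2 v hve
          have hvt : v ≤ t := (hb v hv).2
          refine ⟨q, ⟨Finset.mem_insert_of_mem hqM, hqv⟩, ?_⟩
          rintro r ⟨hr, hrv⟩
          rcases Finset.mem_insert.mp hr with rfl | hr
          · exfalso; simp at hrv; omega
          · exact hqu r ⟨hr, hrv⟩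
      · intro v h1 h2
        rcases Nat.eq_or_lt_of_le h1 with h1 | h1
        · refine ⟨(a, t+1), ⟨Finset.mem_insert_self _ _, Or.inr h1⟩, ?_⟩
          rintro r ⟨hr, hrv⟩
          rcases Finset.mem_insert.mp hr with rfl | hr
          · rfl
          · exfalso
            have h3 := hsec r hr
            rcases (hp1 r hr).2.1 with hrO | hrt
            · have := (hb _ (List.mem_of_mem_erase hrO)).2
              rcases hrv with h' | h' <;> omega
            · rcases hrv with h' | h' <;> omega
        · obtain ⟨q, ⟨hqM, hqv⟩, hqu⟩ := hp3 v (by omega) (by omega)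
          refine ⟨q, ⟨Finset.mem_insert_of_mem hqM, hqv⟩, ?_⟩
          rintro r ⟨hr, hrv⟩
          rcases Finset.mem_insert.mp hr with rfl | hr
          · exfalso; simp at hrv; omega
          · exact hqu r ⟨hr, hrv⟩

lemma pm_sum (c : ℝ) : ∀ (m t : ℕ) (O : List ℕ), O.Pairwise (· > ·) →
    (∀ x ∈ O, 1 ≤ x ∧ x ≤ t) →
    ∑ M ∈ pm t m O, c ^ noRightCrossingCount M = pathsum c m O.length := by
  intro m
  induction m with
  | zero =>
    intro t O hs hb
    match O with
    | [] =>
      have hpm : pm t 0 [] = {∅} := by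
        ext M
        simp only [Finset.mem_singleton]
        constructor
        · intro h
          have h1 := (isPM_of_mem_pm h).1
          exact Finset.eq_empty_iff_forall_notMem.mpr
            (fun p hp => by have := h1 p hp; omega)
        · rintro rfl
          apply mem_pm_of_isPM (by simp)
          exact ⟨by simp, by simp, fun v h1 h2 => absurd h2 (by omega)⟩
      rw [hpm]
      simp [noRightCrossingCount, pathsum]
    | x :: T =>
      have hpm : pm t 0 (x :: T) = ∅ := by
        apply Finset.eq_empty_iff_forall_notMem.mpr
        intro M hM
        obtain ⟨hp1, hp2, _⟩ := isPM_of_mem_pm hM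
        obtain ⟨p, ⟨hpM, _⟩, _⟩ := hp2 x (List.mem_cons_self)
        have := hp1 p hpM; omega
      rw [hpm]
      simp only [List.length_cons, Finset.sum_empty]
      rw [pathsum]
  | succ m ih =>
    intro t O hs hb
    rw [pm_succ t m O hs hb]
    have hb' : ∀ x ∈ (t+1) :: O, 1 ≤ x ∧ x ≤ t + 1 := by
      intro x hx
      rcases List.mem_cons.mp hx with rfl | hx
      · omega
      · have := hb x hx; omega
    have hs' : ((t+1) :: O).Pairwise (· > ·) := by
      rw [List.pairwise_cons]
      exact ⟨fun b hb' => by have := hb b hb'; omega, hs⟩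
    have hdisj : Disjoint (pm (t+1) m ((t+1) :: O))
        (O.toFinset.biUnion fun a => (pm (t+1) m (O.erase a)).image (insert (a, t+1))) := by
      rw [Finset.disjoint_left]
      intro M hM hM2
      obtain ⟨a, haf, hMi⟩ := Finset.mem_biUnion.mp hM2
      obtain ⟨M', hM', rfl⟩ := Finset.mem_image.mp hMi
      have h1 := (isPM_of_mem_pm hM).1 (a, t+1) (Finset.mem_insert_self _ _)
      have h2 : t + 1 + 1 ≤ t + 1 := h1.2.2.1
      omega
    have hpd : (↑O.toFinset : Set ℕ).PairwiseDisjoint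
        (fun a => (pm (t+1) m (O.erase a)).image (insert (a, t+1))) := by
      intro a _ b _ hab
      simp only [Function.onFun]
      rw [Finset.disjoint_left]
      intro M hMa hMb
      obtain ⟨Ma, hMa', rfl⟩ := Finset.mem_image.mp hMa
      obtain ⟨Mb, hMb', heq⟩ := Finset.mem_image.mp hMb
      have hbmem2 : (b, t+1) ∈ insert (a, t+1) Ma := heq ▸ Finset.mem_insert_self _ _
      rcases Finset.mem_insert.mp hbmem2 with h2 | h2
      · exact hab (congrArg Prod.fst h2).symm
      · have h3 : t + 1 + 1 ≤ t + 1 := ((isPM_of_mem_pm hMa').1 _ h2).2.2.1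
        omega
    rw [Finset.sum_union hdisj, Finset.sum_biUnion hpd,
      ih (t+1) ((t+1) :: O) hs' hb']
    have himg : ∀ a ∈ O.toFinset,
        ∑ M ∈ (pm (t+1) m (O.erase a)).image (insert (a, t+1)), c ^ noRightCrossingCount M
          = (if ∀ x ∈ O, x ≤ a then c else 1) * pathsum c m (O.length - 1) := by
      intro a haf
      have ha : a ∈ O := List.mem_toFinset.mp haf
      have hse : (O.erase a).Pairwise (· > ·) := hs.sublist (List.erase_sublist (a := a) (l := O))
      have hbe : ∀ x ∈ O.erase a, 1 ≤ x ∧ x ≤ t + 1 := by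
        intro x hx; have := hb x (List.mem_of_mem_erase hx); omega
      have hinj : ∀ x ∈ pm (t+1) m (O.erase a), ∀ y ∈ pm (t+1) m (O.erase a),
          insert (a, t+1) x = insert (a, t+1) y → x = y := by
        intro x hx y hy hxy
        have hex : (a, t+1) ∉ x := by
          intro hmem
          have h3 : t + 1 + 1 ≤ t + 1 := ((isPM_of_mem_pm hx).1 _ hmem).2.2.1
          omega
        have hey : (a, t+1) ∉ y := by
          intro hmem
          have h3 : t + 1 + 1 ≤ t + 1 := ((isPM_of_mem_pm hy).1 _ hmem).2.2.1
          omega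
        rw [← Finset.erase_insert hex, hxy, Finset.erase_insert hey]
      rw [Finset.sum_image hinj]
      have hcongr : ∀ M' ∈ pm (t+1) m (O.erase a),
          c ^ noRightCrossingCount (insert (a, t+1) M')
            = (if ∀ x ∈ O, x ≤ a then c else 1) * c ^ noRightCrossingCount M' := by
        intro M' hM'
        rw [nR_insert ha hs hb (isPM_of_mem_pm hM')]
        by_cases hcond : ∀ x ∈ O, x ≤ a
        · rw [if_pos hcond, if_pos hcond, pow_succ]; ring
        · rw [if_neg hcond, if_neg hcond, Nat.add_zero, one_mul]
      rw [Finset.sum_congr rfl hcongr, ← Finset.mul_sum,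
        ih (t+1) (O.erase a) hse hbe, List.length_erase_of_mem ha]
    rw [Finset.sum_congr rfl himg]
    match O, hs with
    | [], _ =>
      simp only [List.toFinset_nil, Finset.sum_empty, List.length_cons, List.length_nil,
        add_zero]
      rw [pathsum]
    | b :: T, hs =>
      have hnd : (b :: T).Nodup := nodup_of_sorted_gt hs
      have hbT : ∀ x ∈ T, b > x := (List.pairwise_cons.mp hs).1
      have hbnotin : b ∉ T.toFinset := by
        simp only [List.mem_toFinset]
        exact (List.nodup_cons.mp hnd).1
      have htf : (b :: T).toFinset = insert b T.toFinset := by simp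
      rw [htf, Finset.sum_insert hbnotin]
      have hcb : (∀ x ∈ b :: T, x ≤ b) := by
        intro x hx
        rcases List.mem_cons.mp hx with rfl | hx
        · exact le_refl x
        · exact le_of_lt (hbT x hx)
      rw [if_pos hcb]
      have hrest : ∀ x ∈ T.toFinset,
          (if ∀ y ∈ b :: T, y ≤ x then c else 1) * pathsum c m ((b :: T).length - 1)
            = pathsum c m T.length := by
        intro x hx
        have hxT : x ∈ T := List.mem_toFinset.mp hx
        have : ¬ (∀ y ∈ b :: T, y ≤ x) := by
          intro hh
          have := hh b (List.mem_cons_self)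
          have := hbT x hxT
          omega
        rw [if_neg this, one_mul]
        simp
      rw [Finset.sum_congr rfl hrest, Finset.sum_const,
        List.toFinset_card_of_nodup (List.nodup_cons.mp hnd).2]
      simp only [List.length_cons, Nat.add_sub_cancel]
      rw [pathsum]
      push_cast
      ring

lemma matchings_eq_pm (n : ℕ) : matchings n = pm 0 (2 * n) [] := by
  unfold matchings pm
  ext M
  simp only [Finset.mem_filter, Finset.mem_powerset, Nat.zero_add]
  constructor
  · rintro ⟨hsub, h1, h2⟩
    refine ⟨hsub, ?_, ?_, ?_⟩
    · intro p hp
      have := h1 p hp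
      exact ⟨this.1, Or.inr (by omega), by omega, by omega⟩
    · intro v hv; simp at hv
    · intro v hv1 hv2; exact h2 v (by omega) (by omega)
  · rintro ⟨hsub, h1, _, h3⟩
    refine ⟨hsub, ?_, ?_⟩
    · intro p hp
      obtain ⟨ha, hb', hc, hd⟩ := h1 p hp
      rcases hb' with hb' | hb'
      · simp at hb'
      · exact ⟨ha, by omega, by omega⟩
    · intro v hv1 hv2; exact h3 v (by omega) (by omega)

/-- `μ_{2n}(c)` equals the sum over complete matchings of `{1,…,2n}` of
`c` raised to the number of edges with no right crossing. -/
theorem moments_eq_noRightCrossing_gf (c : ℝ) (n : ℕ) :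
    mu c (2 * n) = ∑ M ∈ matchings n, c ^ noRightCrossingCount M := by
  rw [matchings_eq_pm]
  exact (pm_sum c (2 * n) 0 [] List.Pairwise.nil (by simp)).symm
end

section
/- The associated Hermite polynomials are orthogonal with respect to the functional L_c with L_c(H_n(x;c)·H_m(x;c)) = 0 for n ≠ m, and L_c(H_n(x;c)²) = c(c+1)⋯(c+n−1) (the rising factorial (c)_n). -/
open Finset Polynomial

attribute [local instance] Classical.propDecidable

/-- Rising factorial `(a)_k = a(a+1)⋯(a+k-1)`. -/
def rising (a : ℝ) (k : ℕ) : ℝ := ∏ i ∈ Finset.range k, (a + i)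

/-- The linear functional with moments `μ_n(c)`. -/
noncomputable def Lc (c : ℝ) (P : Polynomial ℝ) : ℝ :=
  ∑ k ∈ Finset.range (P.natDegree + 1), P.coeff k * mu c k

lemma aH_def (c : ℝ) (n : ℕ) :
    aH c (n+2) = X * aH c (n+1) - C ((n:ℝ)+c) * aH c n := rfl

lemma aH_aux (c : ℝ) : ∀ n, (aH c n).Monic ∧ (aH c n).natDegree = n := by
  have key : ∀ n, ((aH c n).Monic ∧ (aH c n).natDegree = n) ∧
      ((aH c (n+1)).Monic ∧ (aH c (n+1)).natDegree = n+1) := by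
    intro n
    induction n with
    | zero => exact ⟨⟨monic_one, natDegree_one⟩, monic_X, natDegree_X⟩
    | succ n ih =>
      obtain ⟨⟨hm0, hd0⟩, hm1, hd1⟩ := ih
      have hpm : (X * aH c (n+1)).Monic := monic_X.mul hm1
      have hpd : (X * aH c (n+1)).natDegree = n + 2 := by
        rw [natDegree_mul X_ne_zero hm1.ne_zero, natDegree_X, hd1]; omega
      have hqd : (C ((n:ℝ)+c) * aH c n).natDegree ≤ n := by
        exact le_trans (natDegree_C_mul_le _ _) (le_of_eq hd0)
      have hdlt : (C ((n:ℝ)+c) * aH c n).natDegree < (X * aH c (n+1)).natDegree := by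
        omega
      refine ⟨⟨hm1, hd1⟩, ?_, ?_⟩
      · rw [aH_def, sub_eq_add_neg]
        refine hpm.add_of_left ?_
        rw [degree_neg]
        exact degree_lt_degree hdlt
      · rw [aH_def, natDegree_sub_eq_left_of_natDegree_lt hdlt, hpd]
  exact fun n => (key n).1

noncomputable def G (c : ℝ) (n k h : ℕ) : ℝ :=
  ∑ j ∈ Finset.range (n+1), (aH c n).coeff j * pathsum c (j + k) h

lemma coeff_aH_succ_succ (c : ℝ) (n j : ℕ) :
    (aH c (n+2)).coeff j = (X * aH c (n+1)).coeff j - ((n:ℝ)+c) * (aH c n).coeff j := by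
  rw [aH_def, coeff_sub, coeff_C_mul]

lemma G_zero (c : ℝ) : ∀ n h, G c n 0 h = if n = h then rising c n else 0 := by
  have key : ∀ n, (∀ h, G c n 0 h = if n = h then rising c n else 0) ∧
      (∀ h, G c (n+1) 0 h = if n+1 = h then rising c (n+1) else 0) := by
    intro n
    induction n with
    | zero =>
      constructor
      · intro h
        match h with
        | 0 => simp [G, aH, pathsum, rising]
        | h+1 => simp [G, aH, pathsum, rising]
      · intro h
        match h with
        | 0 => simp [G, aH, pathsum, Finset.sum_range_succ]
        | 1 => simp [G, aH, pathsum, rising, Finset.sum_range_succ]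
        | h+2 => simp [G, aH, pathsum, Finset.sum_range_succ]
    | succ n ih =>
      obtain ⟨ih0, ih1⟩ := ih
      refine ⟨ih1, ?_⟩
      intro h
      have expand : G c (n+2) 0 h
          = (∑ i ∈ Finset.range (n+2), (aH c (n+1)).coeff i * pathsum c (i+1) h)
            - ((n:ℝ)+c) * G c n 0 h := by
        have h1 : G c (n+2) 0 h = ∑ j ∈ Finset.range (n+3),
            ((X * aH c (n+1)).coeff j * pathsum c (j+0) h
              - ((n:ℝ)+c) * ((aH c n).coeff j * pathsum c (j+0) h)) := by
          unfold G
          refine Finset.sum_congr rfl fun j _ => ?_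
          rw [coeff_aH_succ_succ]; ring
        rw [h1, Finset.sum_sub_distrib, ← Finset.mul_sum]
        congr 1
        · rw [Finset.sum_range_succ']
          simp [coeff_X_mul]
        · unfold G
          rw [Finset.sum_range_succ, Finset.sum_range_succ]
          have z1 : (aH c n).coeff (n+1) = 0 :=
            coeff_eq_zero_of_natDegree_lt (by rw [(aH_aux c n).2]; omega)
          have z2 : (aH c n).coeff (n+2) = 0 :=
            coeff_eq_zero_of_natDegree_lt (by rw [(aH_aux c n).2]; omega)
          simp [z1, z2]
      match h with
      | 0 =>
        have hrec : (∑ i ∈ Finset.range (n+2), (aH c (n+1)).coeff i * pathsum c (i+1) 0)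
            = G c (n+1) 0 1 :=
          Finset.sum_congr rfl fun i _ => rfl
        rw [expand, hrec, ih1 1, ih0 0]
        match n with
        | 0 => simp [rising]
        | n+1 => simp
      | h'+1 =>
        have hrec : (∑ i ∈ Finset.range (n+2), (aH c (n+1)).coeff i * pathsum c (i+1) (h'+1))
            = G c (n+1) 0 (h'+2) + ((h':ℝ)+c) * G c (n+1) 0 h' := by
          unfold G
          rw [Finset.mul_sum, ← Finset.sum_add_distrib]
          refine Finset.sum_congr rfl fun i _ => ?_
          show (aH c (n+1)).coeff i *
            (pathsum c i (h'+2) + ((h':ℝ)+c) * pathsum c i h') = _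
          ring
        rw [expand, hrec, ih1 (h'+2), ih1 h', ih0 (h'+1)]
        by_cases e2 : n + 1 = h'
        · have e1 : ¬ (n+1 = h'+2) := by omega
          have e3 : ¬ (n = h'+1) := by omega
          have e4 : n + 2 = h' + 1 := by omega
          rw [if_neg e1, if_pos e2, if_neg e3, if_pos e4]
          subst e2
          simp only [rising, Finset.prod_range_succ]
          push_cast
          ring
        · by_cases e3 : n = h'+1
          · have e1 : n+1 = h'+2 := by omega
            have e4 : ¬ (n + 2 = h' + 1) := by omega
            rw [if_pos e1, if_neg e2, if_pos e3, if_neg e4]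
            subst e3
            simp only [rising, Finset.prod_range_succ]
            push_cast
            ring
          · have e1 : ¬ (n+1 = h'+2) := by omega
            have e4 : ¬ (n + 2 = h' + 1) := by omega
            rw [if_neg e1, if_neg e2, if_neg e3, if_neg e4]
            ring
  exact fun n => (key n).1

lemma G_succ_zero (c : ℝ) (n k : ℕ) : G c n (k+1) 0 = G c n k 1 :=
  Finset.sum_congr rfl fun j _ => rfl

lemma G_succ_succ (c : ℝ) (n k h : ℕ) :
    G c n (k+1) (h+1) = G c n k (h+2) + ((h:ℝ)+c) * G c n k h := by
  unfold G
  rw [Finset.mul_sum, ← Finset.sum_add_distrib]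
  refine Finset.sum_congr rfl fun j _ => ?_
  show (aH c n).coeff j *
    (pathsum c (j+k) (h+2) + ((h:ℝ)+c) * pathsum c (j+k) h) = _
  ring

lemma G_lt (c : ℝ) : ∀ k n h, h + k < n → G c n k h = 0 := by
  intro k
  induction k with
  | zero =>
    intro n h hlt
    rw [G_zero c n h, if_neg (by omega)]
  | succ k ih =>
    intro n h hlt
    match h with
    | 0 => rw [G_succ_zero]; exact ih n 1 (by omega)
    | h'+1 =>
      rw [G_succ_succ, ih n (h'+2) (by omega), ih n h' (by omega)]
      ring

lemma G_eq (c : ℝ) : ∀ k n h, h + k = n → G c n k h = rising c n := by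
  intro k
  induction k with
  | zero =>
    intro n h he
    rw [G_zero c n h, if_pos (by omega)]
  | succ k ih =>
    intro n h he
    match h with
    | 0 => rw [G_succ_zero]; exact ih n 1 (by omega)
    | h'+1 =>
      rw [G_succ_succ, ih n (h'+2) (by omega), G_lt c k n h' (by omega)]
      ring

lemma Lc_eq_sum (c : ℝ) (P : Polynomial ℝ) (N : ℕ) (hN : P.natDegree ≤ N) :
    Lc c P = ∑ k ∈ Finset.range (N+1), P.coeff k * mu c k := by
  unfold Lc
  refine Finset.sum_subset (Finset.range_subset_range.2 (by omega)) fun k _ hk => ?_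
  rw [coeff_eq_zero_of_natDegree_lt (by simp [Finset.mem_range] at hk; omega), zero_mul]

lemma innerSumG (c : ℝ) (n k N : ℕ) (hkN : n + k ≤ N) :
    ∑ j ∈ Finset.range (N+1), (aH c n * X^k).coeff j * pathsum c j 0 = G c n k 0 := by
  have hstep : ∑ j ∈ Finset.range (N+1), (aH c n * X^k).coeff j * pathsum c j 0
      = ∑ j ∈ Finset.range (n+k+1), (aH c n * X^k).coeff j * pathsum c j 0 := by
    refine (Finset.sum_subset (Finset.range_subset_range.2 (by omega)) fun j _ hj => ?_).symm
    have hd : (aH c n * X^k).natDegree ≤ n + k :=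
      le_trans natDegree_mul_le (by rw [(aH_aux c n).2, natDegree_X_pow])
    rw [coeff_eq_zero_of_natDegree_lt (by simp [Finset.mem_range] at hj; omega), zero_mul]
  rw [hstep, show n+k+1 = k + (n+1) by omega, Finset.sum_range_add]
  have hz : ∑ j ∈ Finset.range k, (aH c n * X^k).coeff j * pathsum c j 0 = 0 := by
    refine Finset.sum_eq_zero fun j hj => ?_
    rw [coeff_mul_X_pow', if_neg (by simp [Finset.mem_range] at hj; omega), zero_mul]
  rw [hz, zero_add]
  refine Finset.sum_congr rfl fun i _ => ?_
  rw [coeff_mul_X_pow', if_pos (by omega)]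
  congr 1
  · congr 1; omega
  · congr 1; omega

lemma Lc_mul (c : ℝ) (n m : ℕ) :
    Lc c (aH c n * aH c m) = ∑ k ∈ Finset.range (m+1), (aH c m).coeff k * G c n k 0 := by
  have hd : (aH c n * aH c m).natDegree ≤ n + m :=
    le_trans natDegree_mul_le (by rw [(aH_aux c n).2, (aH_aux c m).2])
  rw [Lc_eq_sum c _ (n+m) hd]
  have hrep : ∀ j, (aH c n * aH c m).coeff j
      = ∑ k ∈ Finset.range (m+1), (aH c m).coeff k * (aH c n * X^k).coeff j := by
    intro j
    conv_lhs => rw [Polynomial.as_sum_range' (aH c m) (m+1) (by rw [(aH_aux c m).2]; omega)]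
    rw [Finset.mul_sum, Polynomial.finset_sum_coeff]
    refine Finset.sum_congr rfl fun k _ => ?_
    rw [← Polynomial.C_mul_X_pow_eq_monomial, show aH c n * (C ((aH c m).coeff k) * X^k)
      = C ((aH c m).coeff k) * (aH c n * X^k) by ring, coeff_C_mul]
  calc ∑ j ∈ Finset.range (n+m+1), (aH c n * aH c m).coeff j * mu c j
      = ∑ j ∈ Finset.range (n+m+1), ∑ k ∈ Finset.range (m+1),
          (aH c m).coeff k * ((aH c n * X^k).coeff j * pathsum c j 0) := by
        refine Finset.sum_congr rfl fun j _ => ?_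
        rw [hrep j, Finset.sum_mul]
        exact Finset.sum_congr rfl fun k _ => by rw [mu]; ring
    _ = ∑ k ∈ Finset.range (m+1), (aH c m).coeff k
          * ∑ j ∈ Finset.range (n+m+1), (aH c n * X^k).coeff j * pathsum c j 0 := by
        rw [Finset.sum_comm]
        exact Finset.sum_congr rfl fun k _ => by rw [Finset.mul_sum]
    _ = ∑ k ∈ Finset.range (m+1), (aH c m).coeff k * G c n k 0 := by
        refine Finset.sum_congr rfl fun k hk => ?_
        rw [innerSumG c n k (n+m) (by simp [Finset.mem_range] at hk; omega)]


/-- Orthogonality of associated Hermite polynomials and their `L²` norms. -/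
theorem assocHermite_orthogonality (c : ℝ) (n m : ℕ) :
    (n ≠ m → Lc c (aH c n * aH c m) = 0) ∧ Lc c (aH c n * aH c n) = rising c n := by
  have hlt : ∀ a b : ℕ, b < a → Lc c (aH c a * aH c b) = 0 := by
    intro a b hab
    rw [Lc_mul]
    refine Finset.sum_eq_zero fun k hk => ?_
    rw [G_lt c k a 0 (by simp [Finset.mem_range] at hk; omega), mul_zero]
  constructor
  · intro hne
    rcases Nat.lt_or_ge m n with h | h
    · exact hlt n m h
    · rw [mul_comm]; exact hlt m n (by omega)
  · rw [Lc_mul, Finset.sum_range_succ]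
    rw [Finset.sum_eq_zero fun k hk =>
      by rw [G_lt c k n 0 (by simp [Finset.mem_range] at hk; omega), mul_zero], zero_add,
      G_eq c n n 0 (by omega)]
    have h1 : (aH c n).coeff n = 1 := by
      have := (aH_aux c n).1.coeff_natDegree
      rwa [(aH_aux c n).2] at this
    rw [h1, one_mul]
end

section
/- For n ≥ m−1, the mixed linearization formula holds: H_n(x;c)·H_m(x) = Σ_{k=0}^{min(m,⌊(n+m)/2⌋)} binom(n−1+c, k)·binom(m,k)·k!·H_{n+m−2k}(x;c), where binom(n−1+c,k) = (n−1+c)(n−2+c)⋯(n−k+c)/k!. -/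
open Finset Polynomial

attribute [local instance] Classical.propDecidable

noncomputable def ordH : ℕ → Polynomial ℝ
  | 0 => 1
  | 1 => Polynomial.X
  | n + 2 => Polynomial.X * ordH (n + 1) - Polynomial.C ((n : ℝ) + 1) * ordH n

/-- Generalized binomial coefficient `binom(a,k) = a(a−1)⋯(a−k+1)/k!`. -/
noncomputable def genBinom (a : ℝ) (k : ℕ) : ℝ :=
  (∏ i ∈ Finset.range k, (a - i)) / (k.factorial : ℝ)

noncomputable def aHZ (c : ℝ) (j : ℤ) : Polynomial ℝ :=
  if 0 ≤ j then aH c j.toNat else 0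

lemma aHZ_ofNat (c : ℝ) (n : ℕ) : aHZ c (n : ℤ) = aH c n := by
  simp [aHZ]

lemma aHZ_neg (c : ℝ) (j : ℤ) (h : j < 0) : aHZ c j = 0 := by
  simp [aHZ, not_le.mpr h]

lemma X_mul_aHZ (c : ℝ) (j : ℤ) (hj : 0 ≤ j) :
    Polynomial.X * aHZ c j
      = aHZ c (j + 1) + Polynomial.C ((j : ℝ) - 1 + c) * aHZ c (j - 1) := by
  lift j to ℕ using hj
  cases j with
  | zero => simp [aHZ, aH, aHZ_neg]
  | succ k =>
      rw [show ((k + 1 : ℕ) : ℤ) + 1 = ((k + 2 : ℕ) : ℤ) by push_cast; ring,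
        show ((k + 1 : ℕ) : ℤ) - 1 = ((k : ℕ) : ℤ) by push_cast; ring,
        aHZ_ofNat, aHZ_ofNat, aHZ_ofNat]
      have h3 : aH c (k + 2) = Polynomial.X * aH c (k + 1) - Polynomial.C ((k : ℝ) + c) * aH c k := rfl
      rw [h3, show ((((k + 1 : ℕ) : ℤ)) : ℝ) - 1 + c = (k : ℝ) + c by push_cast; ring]
      ring

lemma choose_id (m k : ℕ) :
    (((m + 1).choose k : ℝ)) * ((m : ℝ) + 1 - k) = ((m : ℝ) + 1) * (m.choose k : ℝ) := by
  rcases le_or_gt k (m + 1) with h | h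
  · have hnat : (m + 1) * m.choose k = (m + 1).choose k * (m + 1 - k) :=
      (Nat.add_one_mul_choose_eq m k).trans (Nat.choose_succ_right_eq (m + 1) k)
    have := congrArg (fun x : ℕ => (x : ℝ)) hnat
    push_cast [Nat.cast_sub h] at this
    linarith
  · have h1 : (m + 1).choose k = 0 := Nat.choose_eq_zero_of_lt h
    have h2 : m.choose k = 0 := Nat.choose_eq_zero_of_lt (by omega)
    simp [h1, h2]

lemma genBinom_mul_fact (a : ℝ) (k : ℕ) :
    genBinom a k * (k.factorial : ℝ) = ∏ i ∈ Finset.range k, (a - i) := by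
  rw [genBinom, div_mul_cancel₀]
  exact_mod_cast Nat.factorial_ne_zero k

lemma beta_id (a : ℝ) (m k : ℕ) :
    genBinom a (k+1) * ((m+1).choose (k+1) : ℝ) * ((k+1).factorial : ℝ)
      + genBinom a k * ((m+1).choose k : ℝ) * (k.factorial : ℝ) * (a + (m+1) - 2*k)
      - ((m:ℝ)+1) * (genBinom a k * (m.choose k : ℝ) * (k.factorial : ℝ))
    = genBinom a (k+1) * ((m+2).choose (k+1) : ℝ) * ((k+1).factorial : ℝ) := by
  have hp : ∀ j : ℕ, genBinom a j * ((m+1).choose j : ℝ) * (j.factorial : ℝ)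
      = ((m+1).choose j : ℝ) * (genBinom a j * (j.factorial : ℝ)) := by intro j; ring
  have e1 := genBinom_mul_fact a k
  have e2 := genBinom_mul_fact a (k+1)
  rw [Finset.prod_range_succ] at e2
  have hc : ((m+2).choose (k+1) : ℝ) = ((m+1).choose (k+1) : ℝ) + ((m+1).choose k : ℝ) := by
    rw [show m + 2 = (m+1) + 1 from rfl, Nat.choose_succ_succ]
    push_cast; ring
  have key := choose_id m k
  have h1 : genBinom a (k+1) * ((k+1).factorial : ℝ)
      = (genBinom a k * (k.factorial : ℝ)) * (a - k) := by rw [e1, e2]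
  have h2 : genBinom a (k+1) * ((m+1).choose (k+1) : ℝ) * ((k+1).factorial : ℝ)
      = ((m+1).choose (k+1) : ℝ) * ((genBinom a k * (k.factorial : ℝ)) * (a - k)) := by
    rw [← h1]; ring
  have h3 : genBinom a (k+1) * ((m+2).choose (k+1) : ℝ) * ((k+1).factorial : ℝ)
      = ((m+2).choose (k+1) : ℝ) * ((genBinom a k * (k.factorial : ℝ)) * (a - k)) := by
    rw [← h1]; ring
  rw [h2, h3, hc]
  linear_combination (genBinom a k * (k.factorial : ℝ)) * key

lemma key (c : ℝ) (m : ℕ) : ∀ n : ℕ, m ≤ n + 1 →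
    aH c n * ordH m = ∑ k ∈ Finset.range (m + 1),
      Polynomial.C (genBinom ((n : ℝ) - 1 + c) k * (m.choose k : ℝ) * (k.factorial : ℝ)) *
        aHZ c ((n : ℤ) + m - 2 * k) := by
  induction m using Nat.strong_induction_on with
  | _ m ih =>
  rcases m with _ | (_ | m)
  · intro n _
    simp [ordH, genBinom, aHZ_ofNat]
  · intro n _
    rw [show ordH 1 = Polynomial.X from rfl, Finset.sum_range_succ, Finset.sum_range_one]
    have h := X_mul_aHZ c (n : ℤ) (Int.ofNat_nonneg n)
    rw [aHZ_ofNat] at h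
    rw [mul_comm, h]
    rw [show (n:ℤ) + ((1:ℕ):ℤ) - 2 * ((0:ℕ):ℤ) = (n:ℤ) + 1 by push_cast; ring,
        show (n:ℤ) + ((1:ℕ):ℤ) - 2 * ((1:ℕ):ℤ) = (n:ℤ) - 1 by push_cast; ring]
    simp [genBinom, Nat.factorial]
  · intro n hn
    have IH1 := ih (m+1) (by omega) n (by omega)
    have IH2 := ih m (by omega) n (by omega)
    have hord : ordH (m+2) = Polynomial.X * ordH (m+1) - Polynomial.C ((m:ℝ)+1) * ordH m := rfl
    have expand : aH c n * ordH (m+2)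
        = Polynomial.X * (aH c n * ordH (m+1)) - Polynomial.C ((m:ℝ)+1) * (aH c n * ordH m) := by
      rw [hord]; ring
    rw [expand, IH1, IH2, Finset.mul_sum, Finset.mul_sum]
    set a := (n:ℝ) - 1 + c with ha
    have hX : ∀ k ∈ Finset.range (m+1+1),
        Polynomial.X * (Polynomial.C (genBinom a k * ((m+1).choose k : ℝ) * (k.factorial:ℝ)) *
          aHZ c ((n:ℤ) + ((m+1:ℕ):ℤ) - 2*(k:ℤ)))
        = Polynomial.C (genBinom a k * ((m+1).choose k : ℝ) * (k.factorial:ℝ)) *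
            aHZ c ((n:ℤ) + ((m+2:ℕ):ℤ) - 2*(k:ℤ))
          + Polynomial.C (genBinom a k * ((m+1).choose k : ℝ) * (k.factorial:ℝ) *
              (a + ((m:ℝ)+1) - 2*(k:ℝ))) *
            aHZ c ((n:ℤ) + (m:ℤ) - 2*(k:ℤ)) := by
      intro k hk
      rw [Finset.mem_range] at hk
      have hj : (0:ℤ) ≤ (n:ℤ) + ((m+1:ℕ):ℤ) - 2*(k:ℤ) := by
        have h1 : (k:ℤ) ≤ (m:ℤ) + 1 := by exact_mod_cast Nat.le_of_lt_succ hk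
        have h2 : (m:ℤ) + 1 ≤ (n:ℤ) := by exact_mod_cast (by omega : m + 1 ≤ n)
        push_cast
        omega
      have i1 : ((n:ℤ) + ((m+1:ℕ):ℤ) - 2*(k:ℤ)) + 1 = (n:ℤ) + ((m+2:ℕ):ℤ) - 2*(k:ℤ) := by
        push_cast; ring
      have i2 : ((n:ℤ) + ((m+1:ℕ):ℤ) - 2*(k:ℤ)) - 1 = (n:ℤ) + (m:ℤ) - 2*(k:ℤ) := by
        push_cast; ring
      have e1 : ((((n:ℤ) + ((m+1:ℕ):ℤ) - 2*(k:ℤ)) : ℤ) : ℝ) - 1 + c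
          = a + ((m:ℝ)+1) - 2*(k:ℝ) := by push_cast [ha]; ring
      rw [mul_left_comm, X_mul_aHZ c _ hj, i1, i2, e1, mul_add, ← mul_assoc, ← Polynomial.C_mul]
    rw [Finset.sum_congr rfl hX]
    rw [Finset.sum_add_distrib]
    rw [Finset.sum_range_succ'
      (fun k => Polynomial.C (genBinom a k * ((m+1).choose k : ℝ) * (k.factorial : ℝ)) *
        aHZ c ((n:ℤ) + ((m+2:ℕ):ℤ) - 2*(k:ℤ))) (m+1)]
    rw [Finset.sum_range_succ'
      (fun k => Polynomial.C (genBinom a k * ((m+1+1).choose k : ℝ) * (k.factorial : ℝ)) *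
        aHZ c ((n:ℤ) + ((m+1+1:ℕ):ℤ) - 2*(k:ℤ))) (m+1+1)]
    simp only [show m+1+1 = m+2 from rfl]
    have hz1 : (m+1).choose (m+1+1) = 0 := Nat.choose_succ_self _
    have hz2 : m.choose (m+1) = 0 := Nat.choose_succ_self _
    have ext1 : (∑ k ∈ Finset.range (m+1),
        Polynomial.C (genBinom a (k+1) * ((m+1).choose (k+1) : ℝ) * ((k+1).factorial : ℝ)) *
          aHZ c ((n:ℤ) + ((m+2:ℕ):ℤ) - 2*((k+1:ℕ):ℤ)))
        = ∑ k ∈ Finset.range (m+2),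
        Polynomial.C (genBinom a (k+1) * ((m+1).choose (k+1) : ℝ) * ((k+1).factorial : ℝ)) *
          aHZ c ((n:ℤ) + ((m+2:ℕ):ℤ) - 2*((k+1:ℕ):ℤ)) := by
      rw [Finset.sum_range_succ _ (m+1), hz1]
      norm_num
    have ext2 : (∑ i ∈ Finset.range (m+1),
        Polynomial.C ((m:ℝ)+1) *
          (Polynomial.C (genBinom a i * (m.choose i : ℝ) * (i.factorial : ℝ)) *
            aHZ c ((n:ℤ) + (m:ℕ) - 2*(i:ℕ))))
        = ∑ i ∈ Finset.range (m+2),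
        Polynomial.C ((m:ℝ)+1) *
          (Polynomial.C (genBinom a i * (m.choose i : ℝ) * (i.factorial : ℝ)) *
            aHZ c ((n:ℤ) + (m:ℕ) - 2*(i:ℕ))) := by
      rw [Finset.sum_range_succ _ (m+1), hz2]
      norm_num
    rw [ext1, ext2]
    have per : ∀ k ∈ Finset.range (m+2),
        Polynomial.C (genBinom a (k+1) * ((m+1).choose (k+1) : ℝ) * ((k+1).factorial : ℝ)) *
          aHZ c ((n:ℤ) + ((m+2:ℕ):ℤ) - 2*((k+1:ℕ):ℤ))
        + Polynomial.C (genBinom a k * ((m+1).choose k : ℝ) * (k.factorial : ℝ) *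
            (a + ((m:ℝ)+1) - 2*(k:ℝ))) * aHZ c ((n:ℤ) + (m:ℕ) - 2*(k:ℕ))
        - Polynomial.C ((m:ℝ)+1) *
          (Polynomial.C (genBinom a k * (m.choose k : ℝ) * (k.factorial : ℝ)) *
            aHZ c ((n:ℤ) + (m:ℕ) - 2*(k:ℕ)))
        = Polynomial.C (genBinom a (k+1) * ((m+2).choose (k+1) : ℝ) * ((k+1).factorial : ℝ)) *
          aHZ c ((n:ℤ) + ((m+2:ℕ):ℤ) - 2*((k+1:ℕ):ℤ)) := by
      intro k _
      rw [show (n:ℤ) + ((m+2:ℕ):ℤ) - 2*((k+1:ℕ):ℤ) = (n:ℤ) + (m:ℕ) - 2*(k:ℕ) by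
        push_cast; ring]
      rw [← mul_assoc, ← Polynomial.C_mul, ← add_mul, ← sub_mul, ← Polynomial.C_add,
        ← Polynomial.C_sub]
      rw [beta_id a m k]
    have comb := Finset.sum_congr rfl per
    rw [Finset.sum_sub_distrib, Finset.sum_add_distrib] at comb
    rw [← comb]
    norm_num
    abel

/-- The mixed linearization formula
`H_n(x;c)·H_m(x) = Σ_k binom(n−1+c,k)·binom(m,k)·k!·H_{n+m−2k}(x;c)` for `n ≥ m−1`. -/
theorem mixed_linearization (n m : ℕ) (h : m ≤ n + 1) (c : ℝ) :
    aH c n * ordH m =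
      ∑ k ∈ Finset.range (min m ((n + m) / 2) + 1),
        Polynomial.C (genBinom ((n : ℝ) - 1 + c) k * (m.choose k : ℝ) * (k.factorial : ℝ)) *
          aH c (n + m - 2 * k) := by
  rcases Nat.lt_or_ge n m with hlt | hge
  · have hm : m = n + 1 := by omega
    subst hm
    have hmin : min (n + 1) ((n + (n + 1)) / 2) = n := by omega
    rw [key c (n + 1) n (le_refl _), hmin]
    rw [Finset.sum_range_succ _ (n + 1)]
    have hneg : aHZ c ((n : ℤ) + ((n + 1 : ℕ) : ℤ) - 2 * ((n + 1 : ℕ) : ℤ)) = 0 := by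
      apply aHZ_neg
      push_cast
      omega
    rw [hneg, mul_zero, add_zero]
    apply Finset.sum_congr rfl
    intro k hk
    rw [Finset.mem_range] at hk
    have hcast : ((n + (n + 1) - 2 * k : ℕ) : ℤ) = (n : ℤ) + ((n + 1 : ℕ) : ℤ) - 2 * (k : ℤ) := by
      omega
    rw [← hcast, aHZ_ofNat]
  · have hmin : min m ((n + m) / 2) = m := by omega
    rw [key c m n (by omega), hmin]
    apply Finset.sum_congr rfl
    intro k hk
    rw [Finset.mem_range] at hk
    have hcast : ((n + m - 2 * k : ℕ) : ℤ) = (n : ℤ) + (m : ℤ) - 2 * (k : ℤ) := by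
      omega
    rw [← hcast, aHZ_ofNat]
end

section
/- The associated Hermite polynomial at shifted parameter expands in ordinary Hermite polynomials: H_n(x;c+1) = Σ_{k≥0} (−1)^k·(c)_k·binom(n−k,k)·H_{n−2k}(x), where (c)_k = c(c+1)⋯(c+k−1). -/
open Finset Polynomial

attribute [local instance] Classical.propDecidable

noncomputable def Acoef (c : ℝ) (n k : ℕ) : ℝ :=
  (-1 : ℝ) ^ k * rising c k * ((n - k).choose k : ℝ)

lemma rising_succ (a : ℝ) (k : ℕ) : rising a (k+1) = rising a k * (a + k) :=
  Finset.prod_range_succ _ _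

lemma Acoef_zero (c : ℝ) (n k : ℕ) (h : n < 2*k) : Acoef c n k = 0 := by
  unfold Acoef
  rw [Nat.choose_eq_zero_of_lt (by omega)]
  simp

lemma ordH_X (m : ℕ) : X * ordH m = ordH (m+1) + C (m : ℝ) * ordH (m - 1) := by
  cases m with
  | zero => simp [ordH]
  | succ j =>
    have : ordH (j+2) = X * ordH (j+1) - C ((j:ℝ)+1) * ordH j := rfl
    rw [this]
    push_cast
    ring

lemma key_id (c : ℝ) (n k : ℕ) :
    Acoef c (n+2) (k+1) - Acoef c (n+1) (k+1)
      = Acoef c (n+1) k * ((n+1-2*k : ℕ) : ℝ) - ((n:ℝ)+1+c) * Acoef c n k := by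
  by_cases h : 2*k ≤ n
  · unfold Acoef
    rw [show n+2-(k+1) = (n-k)+1 by omega, show n+1-(k+1) = n-k by omega,
      show n+1-k = (n-k)+1 by omega]
    have e1 : ((n-k)+1).choose (k+1) = (n-k).choose k + (n-k).choose (k+1) :=
      Nat.choose_succ_succ _ _
    have e2 : (n-k).choose k * ((n-k) + 1) = ((n-k)+1).choose k * ((n-k) + 1 - k) :=
      Nat.choose_mul_succ_eq _ _
    rw [show n-k+1-k = n+1-2*k by omega] at e2
    have hcast : ((n - k : ℕ) : ℝ) = (n:ℝ) - k := Nat.cast_sub (by omega)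
    have hnk : ((n+1-2*k : ℕ) : ℝ) = (n:ℝ) + 1 - 2*k := by
      rw [Nat.cast_sub (by omega)]; push_cast; ring
    have e2' : ((n-k).choose k : ℝ) * (((n:ℝ) - k) + 1)
        = (((n-k)+1).choose k : ℝ) * ((n:ℝ) + 1 - 2*k) := by
      have h2 := congrArg (fun m : ℕ => (m : ℝ)) e2
      push_cast at h2
      rw [hnk, hcast] at h2
      exact h2
    rw [e1, hnk, rising_succ]
    push_cast
    linear_combination ((-1:ℝ)^k * rising c k) * e2'
  · rw [Acoef_zero c (n+2) (k+1) (by omega), Acoef_zero c (n+1) (k+1) (by omega),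
      Acoef_zero c n k (by omega), Nat.sub_eq_zero_of_le (by omega : n+1 ≤ 2*k)]
    simp

lemma termX (c : ℝ) (n k : ℕ) :
    X * (C (Acoef c (n+1) k) * ordH (n+1-2*k)) =
      C (Acoef c (n+1) k) * ordH (n+2-2*k)
        + C (Acoef c (n+1) k * ((n+1-2*k : ℕ) : ℝ)) * ordH (n-2*k) := by
  by_cases h : 2*k ≤ n+1
  · have h1 : (n+1-2*k) + 1 = n+2-2*k := by omega
    have h2 : (n+1-2*k) - 1 = n-2*k := by omega
    calc X * (C (Acoef c (n+1) k) * ordH (n+1-2*k))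
        = C (Acoef c (n+1) k) * (X * ordH (n+1-2*k)) := by ring
      _ = _ := by
          rw [ordH_X, h1, h2, mul_add, map_mul]
          ring
  · rw [Acoef_zero c (n+1) k (by omega)]
    simp

lemma sum_ext (c : ℝ) (n m : ℕ) (h : n/2+1 ≤ m) :
    ∑ k ∈ Finset.range (n/2+1), C (Acoef c n k) * ordH (n-2*k)
      = ∑ k ∈ Finset.range m, C (Acoef c n k) * ordH (n-2*k) := by
  apply Finset.sum_subset (Finset.range_subset_range.mpr h)
  intro k _ hk
  rw [Finset.mem_range, not_lt] at hk
  rw [Acoef_zero c n k (by omega)]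
  simp

lemma main_lemma_s16 (c : ℝ) (n : ℕ) :
    aH (c+1) n = ∑ k ∈ Finset.range (n/2+1), C (Acoef c n k) * ordH (n-2*k) := by
  suffices h : ∀ m, (aH (c+1) m = ∑ k ∈ Finset.range (m/2+1), C (Acoef c m k) * ordH (m-2*k))
      ∧ (aH (c+1) (m+1) = ∑ k ∈ Finset.range ((m+1)/2+1), C (Acoef c (m+1) k) * ordH (m+1-2*k)) by
    exact (h n).1
  intro m
  induction m with
  | zero =>
    constructor
    · simp [aH, Acoef, rising, ordH]
    · simp [aH, Acoef, rising, ordH]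
  | succ m ih =>
    refine ⟨ih.2, ?_⟩
    show aH (c+1) (m+2) = ∑ k ∈ Finset.range ((m+2)/2+1), C (Acoef c (m+2) k) * ordH (m+2-2*k)
    have hrec : aH (c+1) (m+2) = X * aH (c+1) (m+1) - C ((m:ℝ) + (c+1)) * aH (c+1) m := rfl
    rw [hrec, ih.1, ih.2,
      sum_ext c (m+2) (m+3) (by omega), sum_ext c (m+1) (m+3) (by omega),
      sum_ext c m (m+3) (by omega), Finset.mul_sum, Finset.mul_sum]
    have hx : ∑ k ∈ Finset.range (m+3), X * (C (Acoef c (m+1) k) * ordH (m+1-2*k))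
        = (∑ k ∈ Finset.range (m+3), C (Acoef c (m+1) k) * ordH (m+2-2*k))
          + ∑ k ∈ Finset.range (m+3), C (Acoef c (m+1) k * ((m+1-2*k : ℕ) : ℝ)) * ordH (m-2*k) := by
      rw [← Finset.sum_add_distrib]
      exact Finset.sum_congr rfl fun k _ => termX c m k
    rw [hx]
    have hdiff : ∑ k ∈ Finset.range (m+3),
          (C (Acoef c (m+2) k) * ordH (m+2-2*k) - C (Acoef c (m+1) k) * ordH (m+2-2*k))
        = ∑ k ∈ Finset.range (m+3),
          (C (Acoef c (m+1) k * ((m+1-2*k : ℕ) : ℝ)) * ordH (m-2*k)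
            - C (((m:ℝ)+1+c) * Acoef c m k) * ordH (m-2*k)) := by
      rw [Finset.sum_range_succ' _ (m+2)]
      have h0 : C (Acoef c (m+2) 0) * ordH (m+2-2*0) - C (Acoef c (m+1) 0) * ordH (m+2-2*0) = 0 := by
        simp [Acoef]
      rw [h0, add_zero, Finset.sum_range_succ _ (m+2)]
      have hlast : C (Acoef c (m+1) (m+2) * ((m+1-2*(m+2) : ℕ) : ℝ)) * ordH (m-2*(m+2))
          - C (((m:ℝ)+1+c) * Acoef c m (m+2)) * ordH (m-2*(m+2)) = 0 := by
        rw [Acoef_zero c (m+1) (m+2) (by omega), Acoef_zero c m (m+2) (by omega)]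
        simp
      rw [hlast, add_zero]
      refine Finset.sum_congr rfl fun k _ => ?_
      rw [show m+2-2*(k+1) = m-2*k by omega, ← sub_mul, ← map_sub, key_id c m k, map_sub, sub_mul]
    rw [Finset.sum_sub_distrib, Finset.sum_sub_distrib] at hdiff
    have e3 : ∑ k ∈ Finset.range (m+3), C ((m:ℝ) + (c+1)) * (C (Acoef c m k) * ordH (m-2*k))
        = ∑ k ∈ Finset.range (m+3), C (((m:ℝ)+1+c) * Acoef c m k) * ordH (m-2*k) := by
      refine Finset.sum_congr rfl fun k _ => ?_
      rw [map_mul]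
      ring_nf
    have hfin : ∀ a b d e : Polynomial ℝ, a - b = d - e → a = b + d - e := by
      intro a b d e h
      linear_combination h
    rw [e3]
    exact (hfin _ _ _ _ hdiff).symm

/-- `H_n(x;c+1) = Σ_k (−1)^k (c)_k binom(n−k,k) H_{n−2k}(x)`. -/
theorem assocHermite_expansion_in_hermite (n : ℕ) (c : ℝ) :
    aH (c + 1) n =
      ∑ k ∈ Finset.range (n / 2 + 1),
        Polynomial.C ((-1 : ℝ) ^ k * rising c k * ((n - k).choose k : ℝ)) * ordH (n - 2 * k) := by
  simpa [Acoef] using main_lemma_s16 c n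
end
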